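/- arXiv:2601.18221 — 3 statements merged into one kernel-verified Lean document; each statement's English description precedes it below -/
import Mathlib

section
/- For every τ in the upper half-plane ℍ and every v ∈ ℂ, the Jacobi theta function θ₁ satisfies the imaginary transformation law θ₁(v, −1/τ) = (τ/i)^{1/2} · e^{πiτv²} · θ₂(τv, τ). -/
open Complex

noncomputable def JThetaFactor (v τ : ℂ) (n : ℕ) : ℂ :=
  (1 - Complex.exp (2 * (Real.pi : ℂ) * I * τ) ^ (n + 1)) *
  (1 - Complex.exp (2 * (Real.pi : ℂ) * I * v) * Complex.exp (2 * (Real.pi : ℂ) * I * τ) ^ (n + 1)) *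
  (1 - Complex.exp (-(2 * (Real.pi : ℂ) * I * v)) * Complex.exp (2 * (Real.pi : ℂ) * I * τ) ^ (n + 1))

/-- The Jacobi theta function θ(v, τ). -/
noncomputable def JTheta (v τ : ℂ) : ℂ :=
  2 * Complex.exp (2 * (Real.pi : ℂ) * I * τ / 8) * Complex.sin ((Real.pi : ℂ) * v) *
    ∏' n : ℕ, JThetaFactor v τ n

noncomputable def JTheta1Factor (v τ : ℂ) (n : ℕ) : ℂ :=
  (1 - Complex.exp (2 * (Real.pi : ℂ) * I * τ) ^ (n + 1)) *
  (1 + Complex.exp (2 * (Real.pi : ℂ) * I * v) * Complex.exp (2 * (Real.pi : ℂ) * I * τ) ^ (n + 1)) *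
  (1 + Complex.exp (-(2 * (Real.pi : ℂ) * I * v)) * Complex.exp (2 * (Real.pi : ℂ) * I * τ) ^ (n + 1))

/-- The Jacobi theta function θ₁(v, τ). -/
noncomputable def JTheta1 (v τ : ℂ) : ℂ :=
  2 * Complex.exp (2 * (Real.pi : ℂ) * I * τ / 8) * Complex.cos ((Real.pi : ℂ) * v) *
    ∏' n : ℕ, JTheta1Factor v τ n

noncomputable def JTheta2Factor (v τ : ℂ) (n : ℕ) : ℂ :=
  (1 - Complex.exp (2 * (Real.pi : ℂ) * I * τ) ^ (n + 1)) *
  (1 - Complex.exp (2 * (Real.pi : ℂ) * I * v) * Complex.exp (2 * (Real.pi : ℂ) * I * τ * ((n : ℂ) + 1 / 2))) *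
  (1 - Complex.exp (-(2 * (Real.pi : ℂ) * I * v)) * Complex.exp (2 * (Real.pi : ℂ) * I * τ * ((n : ℂ) + 1 / 2)))

/-- The Jacobi theta function θ₂(v, τ). -/
noncomputable def JTheta2 (v τ : ℂ) : ℂ := ∏' n : ℕ, JTheta2Factor v τ n

noncomputable def JTheta3Factor (v τ : ℂ) (n : ℕ) : ℂ :=
  (1 - Complex.exp (2 * (Real.pi : ℂ) * I * τ) ^ (n + 1)) *
  (1 + Complex.exp (2 * (Real.pi : ℂ) * I * v) * Complex.exp (2 * (Real.pi : ℂ) * I * τ * ((n : ℂ) + 1 / 2))) *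
  (1 + Complex.exp (-(2 * (Real.pi : ℂ) * I * v)) * Complex.exp (2 * (Real.pi : ℂ) * I * τ * ((n : ℂ) + 1 / 2)))

/-- The Jacobi theta function θ₃(v, τ). -/
noncomputable def JTheta3 (v τ : ℂ) : ℂ := ∏' n : ℕ, JTheta3Factor v τ n


open Finset Filter Topology

set_option maxHeartbeats 1000000

section JacobiTripleProduct

set_option maxHeartbeats 1000000 in
lemma multipliable_one_add {f : ℕ → ℂ} (hf : Summable f) :
    Multipliable (fun n => 1 + f n) := by
  obtain ⟨N, hN⟩ : ∃ N, ∀ n ≥ N, ‖f n‖ ≤ 1 / 2 := by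
    have h := hf.tendsto_atTop_zero
    rw [Metric.tendsto_atTop] at h
    obtain ⟨N, hN⟩ := h (1/2) (by norm_num)
    exact ⟨N, fun n hn => by simpa [dist_eq_norm] using (hN n hn).le⟩
  have hne : ∀ n : ℕ, (1 : ℂ) + f (n + N) ≠ 0 := by
    intro n h
    have h1 : f (n + N) = -1 := by linear_combination h
    have h2 := hN (n + N) (Nat.le_add_left _ _)
    rw [h1] at h2
    norm_num at h2
  have hlog : Summable (fun n => Complex.log (1 + f (n + N))) := by
    have hs : Summable (fun n => (3/2 : ℝ) * ‖f (n + N)‖) := by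
      have h3 := hf.norm
      exact (((summable_nat_add_iff N).mpr h3)).mul_left _
    refine Summable.of_norm_bounded hs (fun n => ?_)
    exact Complex.norm_log_one_add_half_le_self (hN (n + N) (Nat.le_add_left _ _))
  have hmul : Multipliable (fun n => 1 + f (n + N)) :=
    Complex.multipliable_of_summable_log hlog
  exact hmul.hasProd.prod_range_mul.multipliable


lemma summable_geom_aux (c r : ℂ) (hr : ‖r‖ < 1) : Summable (fun n : ℕ => c * r ^ n) :=
  (summable_geometric_of_norm_lt_one hr).mul_left c

lemma multipliable_one_add_geom (c r : ℂ) (hr : ‖r‖ < 1) :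
    Multipliable (fun n : ℕ => 1 + c * r ^ n) :=
  multipliable_one_add (summable_geom_aux c r hr)

noncomputable def qfac (q : ℂ) (n : ℕ) : ℂ := ∏ i ∈ Finset.range n, (1 - q ^ (i + 1))

noncomputable def gb (q : ℂ) : ℕ → ℕ → ℂ
  | _, 0 => 1
  | 0, _ + 1 => 0
  | m + 1, k + 1 => gb q m (k + 1) + q ^ (m - k) * gb q m k

lemma gb_zero_right (q : ℂ) (m : ℕ) : gb q m 0 = 1 := by cases m <;> rfl

lemma gb_succ (q : ℂ) (m k : ℕ) :
    gb q (m + 1) (k + 1) = gb q m (k + 1) + q ^ (m - k) * gb q m k := rfl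

lemma gb_eq_zero (q : ℂ) : ∀ m k : ℕ, m < k → gb q m k = 0 := by
  intro m
  induction m with
  | zero => intro k hk; obtain ⟨k', rfl⟩ := Nat.exists_eq_add_of_lt hk; rfl
  | succ m ih =>
    intro k hk
    obtain ⟨k', rfl⟩ : ∃ k', k = k' + 1 := ⟨k - 1, by omega⟩
    rw [gb_succ, ih _ (by omega), ih _ (by omega)]
    ring

lemma qfac_succ (q : ℂ) (n : ℕ) : qfac q (n + 1) = qfac q n * (1 - q ^ (n + 1)) :=
  Finset.prod_range_succ _ _

lemma gb_mul_qfac (q : ℂ) : ∀ n a b : ℕ, a + b = n →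
    gb q (a + b) a * (qfac q a * qfac q b) = qfac q (a + b) := by
  intro n
  induction n using Nat.strong_induction_on with
  | _ n ih =>
    intro a b hab
    match a, b with
    | 0, b => simp [gb_zero_right, qfac]
    | a + 1, 0 =>
      have h1 : gb q (a + 0) a * (qfac q a * qfac q 0) = qfac q (a + 0) :=
        ih a (by omega) a 0 rfl
      simp only [Nat.add_zero] at h1 ⊢
      have h0 : qfac q 0 = 1 := by simp [qfac]
      rw [gb_succ, gb_eq_zero q a (a+1) (by omega)]
      simp only [h0, mul_one] at h1 ⊢
      have hs : a - a = 0 := by omega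
      rw [hs, pow_zero, zero_add, one_mul, qfac_succ]
      linear_combination (1 - q ^ (a + 1)) * h1
    | a + 1, b + 1 =>
      have key : a + 1 + (b + 1) = (a + b + 1) + 1 := by omega
      rw [key, gb_succ]
      have hsub : a + b + 1 - a = b + 1 := by omega
      rw [hsub]
      have ih1 : gb q (a + 1 + b) (a + 1) * (qfac q (a + 1) * qfac q b) =
          qfac q (a + 1 + b) := ih (a + 1 + b) (by omega) (a + 1) b rfl
      have ih2 : gb q (a + (b + 1)) a * (qfac q a * qfac q (b + 1)) =
          qfac q (a + (b + 1)) := ih (a + (b + 1)) (by omega) a (b + 1) rfl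
      have e1 : a + 1 + b = a + b + 1 := by omega
      have e2 : a + (b + 1) = a + b + 1 := by omega
      rw [e1] at ih1
      rw [e2] at ih2
      rw [qfac_succ q (a + b + 1)]
      have hq1 : qfac q (a + 1) = qfac q a * (1 - q ^ (a + 1)) := qfac_succ q a
      have hq2 : qfac q (b + 1) = qfac q b * (1 - q ^ (b + 1)) := qfac_succ q b
      have expand : (gb q (a + b + 1) (a + 1) + q ^ (b + 1) * gb q (a + b + 1) a) *
          (qfac q (a + 1) * qfac q (b + 1)) =
          (gb q (a + b + 1) (a + 1) * (qfac q (a + 1) * qfac q b)) * (1 - q ^ (b + 1)) +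
          q ^ (b + 1) * ((gb q (a + b + 1) a * (qfac q a * qfac q (b + 1))) * (1 - q ^ (a + 1))) := by
        rw [hq1, hq2]; ring
      rw [expand, ih1, ih2]
      have hpow : q ^ (b + 1) * q ^ (a + 1) = q ^ (a + b + 1 + 1) := by
        rw [← pow_add]; congr 1; omega
      linear_combination (qfac q (a + b + 1)) * hpow

lemma one_sub_pow_ne_zero {q : ℂ} (hq : ‖q‖ < 1) (n : ℕ) : (1 : ℂ) - q ^ (n + 1) ≠ 0 := by
  intro h
  have h1 : q ^ (n + 1) = 1 := by linear_combination -h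
  have h2 : ‖q‖ ^ (n + 1) < 1 := pow_lt_one₀ (norm_nonneg q) hq (Nat.succ_ne_zero n)
  rw [← norm_pow, h1] at h2
  norm_num at h2

lemma qfac_ne_zero {q : ℂ} (hq : ‖q‖ < 1) (n : ℕ) : qfac q n ≠ 0 :=
  Finset.prod_ne_zero_iff.mpr fun i _ => one_sub_pow_ne_zero hq i

lemma exp_neg_le_one_sub {t A : ℝ} (ht : 0 ≤ t) (htA : t ≤ A) (hA : A < 1) :
    Real.exp (-(t / (1 - A))) ≤ 1 - t := by
  have h1A : 0 < 1 - A := by linarith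
  have h1t : 0 < 1 - t := by linarith
  have h2 : t / (1 - t) ≤ t / (1 - A) := div_le_div_of_nonneg_left ht h1A (by linarith)
  have h3 : (1 - t)⁻¹ ≤ Real.exp (t / (1 - A)) := by
    calc (1 - t)⁻¹ = 1 + t / (1 - t) := by field_simp; ring
    _ ≤ 1 + t / (1 - A) := by linarith
    _ ≤ Real.exp (t / (1 - A)) := by
        have := Real.add_one_le_exp (t / (1 - A)); linarith
  have h4 : (Real.exp (t / (1 - A)))⁻¹ ≤ ((1 - t)⁻¹)⁻¹ :=
    inv_anti₀ (by positivity) h3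
  rw [inv_inv] at h4
  rw [Real.exp_neg]
  exact h4

lemma geom_partial_le {q : ℂ} (hq : ‖q‖ < 1) (n : ℕ) :
    ∑ i ∈ Finset.range n, ‖q‖ ^ (i + 1) ≤ ‖q‖ / (1 - ‖q‖) := by
  have hA : (0:ℝ) ≤ ‖q‖ := norm_nonneg q
  have h1A : 0 < 1 - ‖q‖ := by linarith
  have h : ∑ i ∈ Finset.range n, ‖q‖ ^ i ≤ 1 / (1 - ‖q‖) := by
    rw [le_div_iff₀ h1A]
    have hgs := geom_sum_mul (x := ‖q‖) n
    have hpn : (0:ℝ) ≤ ‖q‖ ^ n := pow_nonneg hA n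
    nlinarith [hgs, hpn]
  calc ∑ i ∈ Finset.range n, ‖q‖ ^ (i + 1) = ‖q‖ * ∑ i ∈ Finset.range n, ‖q‖ ^ i := by
        rw [Finset.mul_sum]; exact Finset.sum_congr rfl fun i _ => by ring
  _ ≤ ‖q‖ * (1 / (1 - ‖q‖)) := mul_le_mul_of_nonneg_left h hA
  _ = ‖q‖ / (1 - ‖q‖) := by field_simp

lemma qfac_norm_lower {q : ℂ} (hq : ‖q‖ < 1) (n : ℕ) :
    Real.exp (-(‖q‖ / (1 - ‖q‖) ^ 2)) ≤ ‖qfac q n‖ := by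
  have hA : (0:ℝ) ≤ ‖q‖ := norm_nonneg q
  have h1A : 0 < 1 - ‖q‖ := by linarith
  have step1 : ∀ i ∈ Finset.range n,
      Real.exp (-(‖q‖ ^ (i+1) / (1 - ‖q‖))) ≤ ‖1 - q ^ (i + 1)‖ := by
    intro i _
    have h1 : 1 - ‖q‖ ^ (i + 1) ≤ ‖1 - q ^ (i + 1)‖ := by
      have := norm_sub_norm_le (1 : ℂ) (q ^ (i + 1))
      simpa [norm_pow] using this
    have h2 : Real.exp (-(‖q‖ ^ (i+1) / (1 - ‖q‖))) ≤ 1 - ‖q‖ ^ (i + 1) :=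
      exp_neg_le_one_sub (pow_nonneg hA _)
        (by calc ‖q‖ ^ (i + 1) ≤ ‖q‖ ^ 1 := pow_le_pow_of_le_one hA hq.le (by omega)
            _ = ‖q‖ := pow_one _) hq
    linarith
  calc Real.exp (-(‖q‖ / (1 - ‖q‖) ^ 2))
      ≤ Real.exp (∑ i ∈ Finset.range n, -(‖q‖ ^ (i+1) / (1 - ‖q‖))) := by
        apply Real.exp_le_exp.mpr
        have e1 : ∑ i ∈ Finset.range n, -(‖q‖ ^ (i+1) / (1 - ‖q‖)) =
            -((∑ i ∈ Finset.range n, ‖q‖ ^ (i+1)) / (1 - ‖q‖)) := by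
          rw [Finset.sum_div, ← Finset.sum_neg_distrib]
        rw [e1, neg_le_neg_iff]
        have := geom_partial_le hq n
        calc (∑ i ∈ Finset.range n, ‖q‖ ^ (i+1)) / (1 - ‖q‖)
            ≤ (‖q‖ / (1 - ‖q‖)) / (1 - ‖q‖) := by
              gcongr
        _ = ‖q‖ / (1 - ‖q‖) ^ 2 := by field_simp
  _ = ∏ i ∈ Finset.range n, Real.exp (-(‖q‖ ^ (i+1) / (1 - ‖q‖))) := by rw [Real.exp_sum]
  _ ≤ ∏ i ∈ Finset.range n, ‖1 - q ^ (i + 1)‖ :=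
      Finset.prod_le_prod (fun i _ => (Real.exp_pos _).le) step1
  _ = ‖qfac q n‖ := by rw [qfac, norm_prod]

lemma qfac_norm_upper {q : ℂ} (hq : ‖q‖ < 1) (n : ℕ) :
    ‖qfac q n‖ ≤ Real.exp (‖q‖ / (1 - ‖q‖)) := by
  have hA : (0:ℝ) ≤ ‖q‖ := norm_nonneg q
  calc ‖qfac q n‖ = ∏ i ∈ Finset.range n, ‖1 - q ^ (i + 1)‖ := by rw [qfac, norm_prod]
  _ ≤ ∏ i ∈ Finset.range n, Real.exp (‖q‖ ^ (i + 1)) := by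
      apply Finset.prod_le_prod (fun i _ => norm_nonneg _)
      intro i _
      calc ‖1 - q ^ (i + 1)‖ ≤ ‖(1:ℂ)‖ + ‖q ^ (i + 1)‖ := norm_sub_le _ _
      _ = 1 + ‖q‖ ^ (i + 1) := by simp [norm_pow]
      _ ≤ Real.exp (‖q‖ ^ (i + 1)) := by
          have := Real.add_one_le_exp (‖q‖ ^ (i + 1)); linarith
  _ = Real.exp (∑ i ∈ Finset.range n, ‖q‖ ^ (i + 1)) := (Real.exp_sum _ _).symm
  _ ≤ Real.exp (‖q‖ / (1 - ‖q‖)) := Real.exp_le_exp.mpr (geom_partial_le hq n)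

noncomputable def gbBound (q : ℂ) : ℝ :=
  Real.exp (‖q‖ / (1 - ‖q‖)) * (Real.exp (‖q‖ / (1 - ‖q‖) ^ 2) * Real.exp (‖q‖ / (1 - ‖q‖) ^ 2))

lemma gb_eq_div {q : ℂ} (hq : ‖q‖ < 1) {m k : ℕ} (hk : k ≤ m) :
    gb q m k = qfac q m / (qfac q k * qfac q (m - k)) := by
  have e : k + (m - k) = m := by omega
  have h := gb_mul_qfac q m k (m - k) e
  rw [e] at h
  rw [eq_div_iff (by
    exact mul_ne_zero (qfac_ne_zero hq k) (qfac_ne_zero hq (m - k)))]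
  exact h

lemma gb_norm_le {q : ℂ} (hq : ‖q‖ < 1) (m k : ℕ) : ‖gb q m k‖ ≤ gbBound q := by
  rcases lt_or_ge m k with h | h
  · rw [gb_eq_zero q m k h, norm_zero, gbBound]
    positivity
  · rw [gb_eq_div hq h]
    rw [norm_div, norm_mul, div_eq_mul_inv, mul_inv]
    have hinv : ∀ j : ℕ, (‖qfac q j‖)⁻¹ ≤ Real.exp (‖q‖ / (1 - ‖q‖) ^ 2) := by
      intro j
      have h1 := qfac_norm_lower hq j
      have h2 := inv_anti₀ (Real.exp_pos _) h1
      rwa [Real.exp_neg, inv_inv] at h2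
    rw [gbBound, ← mul_assoc]
    have hq0 : (0:ℝ) < ‖qfac q k‖ := norm_pos_iff.mpr (qfac_ne_zero hq k)
    have hq1 : (0:ℝ) < ‖qfac q (m - k)‖ := norm_pos_iff.mpr (qfac_ne_zero hq (m - k))
    calc ‖qfac q m‖ * ‖qfac q k‖⁻¹ * ‖qfac q (m-k)‖⁻¹
        ≤ Real.exp (‖q‖ / (1 - ‖q‖)) * Real.exp (‖q‖ / (1 - ‖q‖) ^ 2) *
          Real.exp (‖q‖ / (1 - ‖q‖) ^ 2) := by
          apply mul_le_mul (mul_le_mul (qfac_norm_upper hq m) (hinv k) (by positivity)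
            (by positivity)) (hinv (m-k)) (by positivity) (by positivity)
    _ = _ := by ring

lemma multipliable_qfac_fac {q : ℂ} (hq : ‖q‖ < 1) :
    Multipliable (fun n : ℕ => 1 - q ^ (n + 1)) :=
  (multipliable_one_add_geom (-q) q hq).congr
    (fun n => by rw [pow_succ]; ring)

noncomputable def Pinf (q : ℂ) : ℂ := ∏' n : ℕ, (1 - q ^ (n + 1))

lemma tendsto_qfac {q : ℂ} (hq : ‖q‖ < 1) :
    Tendsto (qfac q) atTop (𝓝 (Pinf q)) := by
  have := (multipliable_qfac_fac hq).hasProd.tendsto_prod_nat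
  exact this

lemma Pinf_ne_zero {q : ℂ} (hq : ‖q‖ < 1) : Pinf q ≠ 0 := by
  have h1 : Real.exp (-(‖q‖ / (1 - ‖q‖) ^ 2)) ≤ ‖Pinf q‖ :=
    ge_of_tendsto' ((tendsto_qfac hq).norm) (fun n => qfac_norm_lower hq n)
  intro h
  rw [h, norm_zero] at h1
  exact absurd h1 (not_le.mpr (Real.exp_pos _))

lemma gauss_qbinom (q z : ℂ) : ∀ M : ℕ, ∏ j ∈ Finset.range M, (1 + z * q ^ j) =
    ∑ k ∈ Finset.range (M + 1), q ^ (∑ i ∈ Finset.range k, i) * gb q M k * z ^ k := by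
  intro M
  induction M with
  | zero => simp [gb_zero_right]
  | succ M ih =>
    rw [Finset.prod_range_succ, ih]
    have hsplit : ∑ k ∈ Finset.range (M + 1 + 1),
        q ^ (∑ i ∈ Finset.range k, i) * gb q (M+1) k * z ^ k
        = (∑ k ∈ Finset.range (M + 1),
            q ^ (∑ i ∈ Finset.range (k+1), i) * gb q (M+1) (k+1) * z ^ (k+1)) + 1 := by
      rw [Finset.sum_range_succ']
      simp [gb_zero_right]
    rw [hsplit]
    have expand : ∀ k ∈ Finset.range (M+1),
        q ^ (∑ i ∈ Finset.range (k+1), i) * gb q (M+1) (k+1) * z ^ (k+1)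
        = q ^ (∑ i ∈ Finset.range (k+1), i) * gb q M (k+1) * z ^ (k+1)
          + (q ^ (∑ i ∈ Finset.range k, i) * gb q M k * z ^ k) * (q ^ M * z) := by
      intro k hk
      rw [Finset.mem_range] at hk
      rw [gb_succ]
      have e1 : ∑ i ∈ Finset.range (k+1), i = (∑ i ∈ Finset.range k, i) + k :=
        Finset.sum_range_succ _ _
      have e2 : q ^ ((∑ i ∈ Finset.range k, i) + k) * q ^ (M - k)
          = q ^ (∑ i ∈ Finset.range k, i) * q ^ M := by
        rw [← pow_add, ← pow_add]
        congr 1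
        omega
      rw [e1]
      calc q ^ ((∑ i ∈ Finset.range k, i) + k) * (gb q M (k + 1) + q ^ (M - k) * gb q M k)
            * z ^ (k + 1)
          = q ^ ((∑ i ∈ Finset.range k, i) + k) * gb q M (k+1) * z ^ (k+1)
            + (q ^ ((∑ i ∈ Finset.range k, i) + k) * q ^ (M - k)) * gb q M k * z ^ (k+1) := by
            ring
      _ = _ := by rw [e2]; ring
    rw [Finset.sum_congr rfl expand, Finset.sum_add_distrib, ← Finset.sum_mul]
    have hA : (∑ k ∈ Finset.range (M+1),
          q ^ (∑ i ∈ Finset.range (k+1), i) * gb q M (k+1) * z ^ (k+1)) + 1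
        = ∑ k ∈ Finset.range (M + 1), q ^ (∑ i ∈ Finset.range k, i) * gb q M k * z ^ k := by
      have h1 := Finset.sum_range_succ'
        (fun k => q ^ (∑ i ∈ Finset.range k, i) * gb q M k * z ^ k) (M+1)
      have h2 := Finset.sum_range_succ
        (fun k => q ^ (∑ i ∈ Finset.range k, i) * gb q M k * z ^ k) (M+1)
      rw [h2] at h1
      simp only [gb_eq_zero q M (M+1) (by omega), gb_zero_right, mul_zero, zero_mul,
        add_zero, pow_zero, mul_one, one_mul, Finset.range_zero, Finset.sum_empty] at h1
      linear_combination -h1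
    linear_combination -hA

lemma prod_zpow_sum {Q : ℂ} (hQ0 : Q ≠ 0) (N : ℕ) (f : ℕ → ℤ) :
    ∏ j ∈ Finset.range N, Q ^ f j = Q ^ (∑ j ∈ Finset.range N, f j) := by
  induction N with
  | zero => simp
  | succ n ih => rw [Finset.prod_range_succ, Finset.sum_range_succ, ih, zpow_add₀ hQ0]

lemma sum_odd_int (N : ℕ) : ∑ j ∈ Finset.range N, (2*(j:ℤ)+1) = (N:ℤ)^2 := by
  induction N with
  | zero => simp
  | succ n ih => rw [Finset.sum_range_succ, ih]; push_cast; ring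

lemma two_triangle (k : ℕ) : 2 * ((∑ i ∈ Finset.range k, i : ℕ) : ℤ) = (k:ℤ)^2 - k := by
  induction k with
  | zero => simp
  | succ n ih => rw [Finset.sum_range_succ]; push_cast at ih ⊢; ring_nf; ring_nf at ih; omega

lemma key_finite {Q x : ℂ} (hQ0 : Q ≠ 0) (hx : x ≠ 0) (N : ℕ) :
    (∏ j ∈ Finset.range N, (1 + x * Q ^ (2*(j:ℤ)+1))) *
      ∏ j ∈ Finset.range N, (1 + x⁻¹ * Q ^ (2*(j:ℤ)+1)) =
    ∑ k ∈ Finset.range (2*N+1),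
      gb (Q^2) (2*N) k * Q ^ (((k:ℤ) - N)^2) * x ^ ((k:ℤ) - N) := by
  have hQ2 : (Q:ℂ)^2 ≠ 0 := pow_ne_zero 2 hQ0
  have G := gauss_qbinom (Q^2) (x * Q ^ ((1:ℤ) - 2*N)) (2*N)
  -- left side of G
  have hL : ∏ j ∈ Finset.range (2*N), (1 + (x * Q ^ ((1:ℤ) - 2*N)) * (Q^2) ^ j)
      = (x ^ N * Q ^ (-(N:ℤ)^2)) *
        ((∏ j ∈ Finset.range N, (1 + x⁻¹ * Q ^ (2*(j:ℤ)+1))) *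
          ∏ j ∈ Finset.range N, (1 + x * Q ^ (2*(j:ℤ)+1))) := by
    have hterm : ∀ j : ℕ, (1 + (x * Q ^ ((1:ℤ) - 2*N)) * (Q^2) ^ j)
        = 1 + x * Q ^ (2*(j:ℤ)+1-2*N) := by
      intro j
      have : (Q^2) ^ j = Q ^ (2*(j:ℤ)) := by
        rw [← zpow_natCast (Q^2) j, ← zpow_natCast Q 2, ← zpow_mul]
        norm_num [mul_comm]
      rw [this, mul_assoc, ← zpow_add₀ hQ0]
      ring_nf
    rw [Finset.prod_congr rfl (fun j _ => hterm j)]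
    have h2N : 2*N = N + N := by omega
    rw [h2N, Finset.prod_range_add]
    have hsecond : ∀ j ∈ Finset.range N,
        (1 + x * Q ^ (2*((N + j : ℕ):ℤ)+1-2*(N:ℤ))) = 1 + x * Q ^ (2*(j:ℤ)+1) := by
      intro j _
      congr 2
      push_cast
      ring
    have hfirst : ∀ j ∈ Finset.range N,
        (1 + x * Q ^ (2*(j:ℤ)+1-2*(N:ℤ)))
        = (x * Q ^ (2*(j:ℤ)+1-2*(N:ℤ))) * (1 + x⁻¹ * Q ^ (2*((N-1-j : ℕ):ℤ)+1)) := by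
      intro j hj
      rw [Finset.mem_range] at hj
      have he : 2*((N-1-j : ℕ):ℤ)+1 = -(2*(j:ℤ)+1-2*(N:ℤ)) := by
        have : ((N-1-j : ℕ):ℤ) = (N:ℤ)-1-j := by omega
        rw [this]; ring
      rw [he, mul_add, mul_one]
      have : x * Q ^ (2*(j:ℤ)+1-2*(N:ℤ)) * (x⁻¹ * Q ^ (-(2*(j:ℤ)+1-2*(N:ℤ))))
          = (x * x⁻¹) * (Q ^ (2*(j:ℤ)+1-2*(N:ℤ)) * Q ^ (-(2*(j:ℤ)+1-2*(N:ℤ)))) := by ring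
      rw [this, mul_inv_cancel₀ hx, ← zpow_add₀ hQ0]
      simp
      ring
    rw [Finset.prod_congr rfl hsecond, Finset.prod_congr rfl hfirst,
      Finset.prod_mul_distrib, Finset.prod_mul_distrib, Finset.prod_const,
      prod_zpow_sum hQ0, Finset.prod_range_reflect (fun j => 1 + x⁻¹ * Q ^ (2*(j:ℤ)+1)) N]
    have hsum : ∑ j ∈ Finset.range N, (2*(j:ℤ)+1-2*(N:ℤ)) = -(N:ℤ)^2 := by
      rw [Finset.sum_sub_distrib, sum_odd_int, Finset.sum_const]
      simp
      ring
    rw [hsum, Finset.card_range]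
    ring
  -- right side of G
  have hR : ∑ k ∈ Finset.range (2*N+1),
        (Q^2) ^ (∑ i ∈ Finset.range k, i) * gb (Q^2) (2*N) k * (x * Q ^ ((1:ℤ) - 2*N)) ^ k
      = (x ^ N * Q ^ (-(N:ℤ)^2)) * ∑ k ∈ Finset.range (2*N+1),
          gb (Q^2) (2*N) k * Q ^ (((k:ℤ) - N)^2) * x ^ ((k:ℤ) - N) := by
    rw [Finset.mul_sum]
    refine Finset.sum_congr rfl (fun k hk => ?_)
    rw [Finset.mem_range] at hk
    have e1 : (Q^2 : ℂ) ^ (∑ i ∈ Finset.range k, i) = Q ^ (2 * ((∑ i ∈ Finset.range k, i : ℕ):ℤ)) := by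
      rw [← zpow_natCast (Q^2) _, ← zpow_natCast Q 2, ← zpow_mul]
      norm_num
    have e2 : (x * Q ^ ((1:ℤ) - 2*N)) ^ k = x ^ (k:ℤ) * Q ^ (((1:ℤ) - 2*N) * k) := by
      rw [mul_pow, ← zpow_natCast x k, ← zpow_natCast (Q ^ ((1:ℤ)-2*N)) k, ← zpow_mul]
    rw [e1, e2, two_triangle]
    have e3 : Q ^ ((k:ℤ)^2 - k) * Q ^ (((1:ℤ) - 2*N) * k) = Q ^ (((k:ℤ) - N)^2) * Q ^ (-(N:ℤ)^2) := by
      rw [← zpow_add₀ hQ0, ← zpow_add₀ hQ0]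
      congr 1
      ring
    have e4 : x ^ (k:ℤ) = x ^ ((k:ℤ) - N) * x ^ (N:ℤ) := by
      rw [← zpow_add₀ hx]
      congr 1
      ring
    rw [e4]
    have e5 : x ^ ((N:ℕ):ℤ) = x ^ N := zpow_natCast x N
    calc Q ^ ((k:ℤ)^2 - k) * gb (Q^2) (2*N) k * (x ^ ((k:ℤ) - N) * x ^ (N:ℤ) * Q ^ (((1:ℤ) - 2*N) * k))
        = (Q ^ ((k:ℤ)^2 - k) * Q ^ (((1:ℤ) - 2*N) * k)) * gb (Q^2) (2*N) k *
          x ^ ((k:ℤ) - N) * x ^ (N:ℤ) := by ring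
    _ = _ := by rw [e3, e5]; ring
  rw [hL, hR] at G
  have hc : (x ^ N * Q ^ (-(N:ℤ)^2)) ≠ 0 :=
    mul_ne_zero (pow_ne_zero N hx) (zpow_ne_zero _ hQ0)
  have := mul_left_cancel₀ hc G
  rw [mul_comm (∏ j ∈ Finset.range N, (1 + x⁻¹ * Q ^ (2*(j:ℤ)+1))) _] at this
  exact this

lemma zpow_odd_eq (Q : ℂ) (n : ℕ) : Q ^ (2*(n:ℤ)+1) = Q * (Q^2) ^ n := by
  have h : (2*(n:ℤ)+1) = ((2*n+1 : ℕ) : ℤ) := by push_cast; ring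
  rw [h, zpow_natCast, pow_succ, pow_mul, mul_comm]

lemma multipliable_odd_fac {Q : ℂ} (hQ : ‖Q‖ < 1) (c : ℂ) :
    Multipliable (fun n : ℕ => 1 + c * Q ^ (2*(n:ℤ)+1)) := by
  have hq : ‖Q^2‖ < 1 := by
    rw [norm_pow]
    exact pow_lt_one₀ (norm_nonneg Q) hQ (by norm_num)
  exact (multipliable_one_add_geom (c * Q) (Q^2) hq).congr
    (fun n => by rw [zpow_odd_eq]; ring)

theorem jacobi_triple_product {Q x : ℂ} (hQ : ‖Q‖ < 1) (hQ0 : Q ≠ 0) (hx : x ≠ 0) :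
    (∏' n : ℕ, (1 - (Q^2) ^ (n+1))) *
      ((∏' n : ℕ, (1 + x * Q ^ (2*(n:ℤ)+1))) * (∏' n : ℕ, (1 + x⁻¹ * Q ^ (2*(n:ℤ)+1))))
    = ∑' n : ℤ, Q ^ (n^2) * x ^ n := by
  have hq : ‖Q^2‖ < 1 := by
    rw [norm_pow]; exact pow_lt_one₀ (norm_nonneg Q) hQ (by norm_num)
  set q : ℂ := Q^2 with hqdef
  have hQpos : (0:ℝ) < ‖Q‖ := norm_pos_iff.mpr hQ0
  have hxpos : (0:ℝ) < ‖x‖ := norm_pos_iff.mpr hx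
  -- the bound
  set T : ℝ := (-Real.log ‖Q‖) / Real.pi with hTdef
  set S : ℝ := |Real.log ‖x‖| / (2 * Real.pi) with hSdef
  have hT : 0 < T := div_pos (neg_pos.mpr (Real.log_neg hQpos hQ)) Real.pi_pos
  have hnorm_eq : ∀ n : ℤ, ‖Q ^ (n^2) * x ^ n‖ ≤ Real.exp (-Real.pi * (T * n^2 - 2*S*|(n:ℝ)|)) := by
    intro n
    have h1 : ‖Q ^ (n^2) * x ^ n‖ = ‖Q‖ ^ (n^2) * ‖x‖ ^ n := by
      rw [norm_mul, norm_zpow, norm_zpow]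
    have h2 : (‖Q‖:ℝ) ^ (n^2) = Real.exp (Real.log ‖Q‖ * (n^2 : ℤ)) := by
      rw [← Real.rpow_intCast ‖Q‖ (n^2), Real.rpow_def_of_pos hQpos]
    have h3 : (‖x‖:ℝ) ^ (n:ℤ) = Real.exp (Real.log ‖x‖ * (n : ℤ)) := by
      rw [← Real.rpow_intCast ‖x‖ n, Real.rpow_def_of_pos hxpos]
    rw [h1, h2, h3, ← Real.exp_add, Real.exp_le_exp]
    have habs : Real.log ‖x‖ * (n:ℝ) ≤ |Real.log ‖x‖| * |(n:ℝ)| := by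
      calc Real.log ‖x‖ * (n:ℝ) ≤ |Real.log ‖x‖ * (n:ℝ)| := le_abs_self _
      _ = |Real.log ‖x‖| * |(n:ℝ)| := abs_mul _ _
    have hpi : Real.pi ≠ 0 := Real.pi_ne_zero
    have hexp : -Real.pi * (T * (n:ℝ)^2 - 2*S*|(n:ℝ)|)
        = Real.log ‖Q‖ * (n:ℝ)^2 + |Real.log ‖x‖| * |(n:ℝ)| := by
      rw [hTdef, hSdef]
      field_simp
      ring
    push_cast
    rw [hexp]
    push_cast at habs ⊢
    nlinarith [habs]
  set bound : ℤ → ℝ := fun n => gbBound q * Real.exp (-Real.pi * (T * n^2 - 2*S*|(n:ℝ)|))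
    with hbder
  have hbound_summable : Summable bound := by
    have := (summable_pow_mul_jacobiTheta₂_term_bound S hT 0).mul_left (gbBound q)
    refine this.congr (fun n => ?_)
    rw [hbder]
    push_cast
    norm_num
  -- F N n
  set F : ℕ → ℤ → ℂ := fun N n =>
    if n.natAbs ≤ N then gb q (2*N) ((n + N).toNat) * (Q ^ (n^2) * x ^ n) else 0 with hFdef
  have hFsum : ∀ N : ℕ, ∑' n : ℤ, F N n = ∑ k ∈ Finset.range (2*N+1),
      gb q (2*N) k * Q ^ (((k:ℤ) - N)^2) * x ^ ((k:ℤ) - N) := by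
    intro N
    have hmap : ∑ k ∈ Finset.range (2*N+1),
        gb q (2*N) k * Q ^ (((k:ℤ) - N)^2) * x ^ ((k:ℤ) - N)
        = ∑ k ∈ Finset.range (2*N+1), F N ((k:ℤ) - N) := by
      refine Finset.sum_congr rfl (fun k hk => ?_)
      rw [Finset.mem_range] at hk
      have hcond : ((k:ℤ) - N).natAbs ≤ N := by omega
      have htn : (((k:ℤ) - N) + N).toNat = k := by omega
      rw [hFdef]
      simp only [hcond, if_true, htn]
      ring
    rw [hmap]
    have hsm := Finset.sum_map (Finset.range (2*N+1))
      ⟨fun k : ℕ => (k:ℤ) - N, fun a b h => by simp only at h; omega⟩ (F N)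
    erw [← hsm]
    refine tsum_eq_sum (fun n hn => ?_)
    rw [hFdef]
    simp only
    rw [if_neg]
    intro hcond
    apply hn
    simp only [Finset.mem_map, Finset.mem_range, Function.Embedding.coeFn_mk]
    exact ⟨(n + N).toNat, by omega, by show ((n + N).toNat : ℤ) - N = n; omega⟩
  -- pointwise limits
  have hpt : ∀ n : ℤ, Tendsto (fun N => F N n) atTop (𝓝 ((Pinf q)⁻¹ * (Q ^ (n^2) * x ^ n))) := by
    intro n
    have h2N : Tendsto (fun N : ℕ => 2*N) atTop atTop :=
      tendsto_atTop_atTop_of_monotone (fun a b h => by omega) (fun b => ⟨b, by omega⟩)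
    have hk1 : Tendsto (fun N : ℕ => (n + N).toNat) atTop atTop :=
      tendsto_atTop_mono (fun N => by omega) (tendsto_sub_atTop_nat n.natAbs)
    have hk2 : Tendsto (fun N : ℕ => (N - n).toNat) atTop atTop :=
      tendsto_atTop_mono (fun N => by omega) (tendsto_sub_atTop_nat n.natAbs)
    have hgb : Tendsto (fun N => gb q (2*N) ((n + N).toNat)) atTop (𝓝 ((Pinf q)⁻¹)) := by
      have hdiv : Tendsto (fun N : ℕ => qfac q (2*N) /
          (qfac q ((n + N).toNat) * qfac q ((N - n).toNat))) atTop
          (𝓝 (Pinf q / (Pinf q * Pinf q))) :=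
        ((tendsto_qfac hq).comp h2N).div
          (((tendsto_qfac hq).comp hk1).mul ((tendsto_qfac hq).comp hk2))
          (mul_ne_zero (Pinf_ne_zero hq) (Pinf_ne_zero hq))
      have heq : Pinf q / (Pinf q * Pinf q) = (Pinf q)⁻¹ := by
        field_simp
      rw [heq] at hdiv
      refine hdiv.congr' ?_
      filter_upwards [eventually_ge_atTop n.natAbs] with N hN
      have hle : (n + N).toNat ≤ 2*N := by omega
      rw [gb_eq_div hq hle]
      have : 2*N - (n + N).toNat = (N - n).toNat := by omega
      rw [this]
    have := hgb.mul_const (Q ^ (n^2) * x ^ n)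
    refine this.congr' ?_
    filter_upwards [eventually_ge_atTop n.natAbs] with N hN
    rw [hFdef]
    simp only [hN, if_pos]
  -- bound
  have hbd : ∀ᶠ N in (atTop : Filter ℕ), ∀ n : ℤ, ‖F N n‖ ≤ bound n := by
    refine Eventually.of_forall (fun N n => ?_)
    rw [hFdef, hbder]
    by_cases hcond : n.natAbs ≤ N
    · simp only [hcond, if_true]
      rw [norm_mul]
      exact mul_le_mul (gb_norm_le hq _ _) (hnorm_eq n) (norm_nonneg _)
        (le_trans (norm_nonneg _) (gb_norm_le hq 0 0))
    · simp only [hcond, if_false]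
      rw [norm_zero]
      exact mul_nonneg (le_trans (norm_nonneg (gb q 0 0)) (gb_norm_le hq 0 0))
        (Real.exp_pos _).le
  have hTannery := tendsto_tsum_of_dominated_convergence hbound_summable hpt hbd
  -- left side limit
  have hMx := multipliable_odd_fac hQ x
  have hMxi := multipliable_odd_fac hQ x⁻¹
  have hLlim : Tendsto (fun N => ∑' n : ℤ, F N n) atTop
      (𝓝 ((∏' n : ℕ, (1 + x * Q ^ (2*(n:ℤ)+1))) * (∏' n : ℕ, (1 + x⁻¹ * Q ^ (2*(n:ℤ)+1))))) := by
    have h := (hMx.hasProd.mul hMxi.hasProd).tendsto_prod_nat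
    refine h.congr (fun N => ?_)
    rw [Finset.prod_mul_distrib, key_finite hQ0 hx N, ← hFsum N]
  have hkey : (∏' n : ℕ, (1 + x * Q ^ (2*(n:ℤ)+1))) * (∏' n : ℕ, (1 + x⁻¹ * Q ^ (2*(n:ℤ)+1)))
      = (Pinf q)⁻¹ * ∑' n : ℤ, Q ^ (n^2) * x ^ n := by
    have h2 : ∑' (n : ℤ), (Pinf q)⁻¹ * (Q ^ (n^2) * x ^ n)
        = (Pinf q)⁻¹ * ∑' n : ℤ, Q ^ (n^2) * x ^ n := tsum_mul_left
    rw [← h2]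
    exact tendsto_nhds_unique hLlim hTannery
  have hPdef : Pinf q = ∏' n : ℕ, (1 - (Q^2) ^ (n+1)) := rfl
  rw [← hPdef, hkey, ← mul_assoc, mul_inv_cancel₀ (Pinf_ne_zero hq), one_mul]

lemma exp_pi_I_tau_norm {τ : ℂ} (hτ : 0 < τ.im) : ‖cexp ((Real.pi:ℂ) * I * τ)‖ < 1 := by
  rw [Complex.norm_exp]
  rw [Real.exp_lt_one_iff]
  have : ((Real.pi:ℂ) * I * τ).re = -(Real.pi * τ.im) := by
    simp [Complex.mul_re, Complex.mul_im]
  rw [this]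
  have := Real.pi_pos
  nlinarith

lemma jacobiTheta₂_eq_triple {τ : ℂ} (hτ : 0 < τ.im) (w : ℂ) :
    jacobiTheta₂ w τ =
      (∏' n : ℕ, (1 - (cexp ((Real.pi:ℂ) * I * τ) ^ 2) ^ (n+1))) *
      ((∏' n : ℕ, (1 + cexp (2 * (Real.pi:ℂ) * I * w) * cexp ((Real.pi:ℂ) * I * τ) ^ (2*(n:ℤ)+1))) *
       (∏' n : ℕ, (1 + (cexp (2 * (Real.pi:ℂ) * I * w))⁻¹ *
          cexp ((Real.pi:ℂ) * I * τ) ^ (2*(n:ℤ)+1)))) := by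
  rw [jacobi_triple_product (exp_pi_I_tau_norm hτ) (Complex.exp_ne_zero _) (Complex.exp_ne_zero _)]
  rw [jacobiTheta₂]
  refine tsum_congr (fun n => ?_)
  rw [jacobiTheta₂_term]
  rw [← Complex.exp_int_mul ((Real.pi:ℂ) * I * τ) (n^2), ← Complex.exp_int_mul (2 * (Real.pi:ℂ) * I * w) n,
    ← Complex.exp_add]
  congr 1
  push_cast
  ring

lemma exp_two_pi_eq_sq (τ : ℂ) :
    cexp (2 * (Real.pi:ℂ) * I * τ) = cexp ((Real.pi:ℂ) * I * τ) ^ 2 := by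
  rw [← Complex.exp_nat_mul]
  congr 1
  push_cast
  ring

lemma exp_half_eq_odd (τ : ℂ) (n : ℕ) :
    cexp (2 * (Real.pi:ℂ) * I * τ * ((n : ℂ) + 1/2)) = cexp ((Real.pi:ℂ) * I * τ) ^ (2*(n:ℤ)+1) := by
  rw [← Complex.exp_int_mul]
  congr 1
  push_cast
  ring

lemma theta2_eq {τ : ℂ} (hτ : 0 < τ.im) (z : ℂ) :
    JTheta2 z τ = jacobiTheta₂ (z + 1/2) τ := by
  rw [jacobiTheta₂_eq_triple hτ (z + 1/2)]
  have hQn := exp_pi_I_tau_norm hτ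
  have hq : ‖cexp ((Real.pi:ℂ)*I*τ)^2‖ < 1 := by
    rw [norm_pow]
    exact pow_lt_one₀ (norm_nonneg _) hQn two_ne_zero
  have hA := multipliable_qfac_fac hq
  have hB := multipliable_odd_fac hQn (cexp (2*(Real.pi:ℂ)*I*(z+1/2)))
  have hC := multipliable_odd_fac hQn (cexp (2*(Real.pi:ℂ)*I*(z+1/2)))⁻¹
  rw [← Multipliable.tprod_mul hB hC, ← Multipliable.tprod_mul hA (hB.mul hC)]
  simp only [JTheta2]
  refine tprod_congr (fun n => ?_)
  simp only [JTheta2Factor, Pi.mul_apply]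
  have hx' : cexp (2*(Real.pi:ℂ)*I*(z+1/2)) = -cexp (2*(Real.pi:ℂ)*I*z) := by
    rw [show 2*(Real.pi:ℂ)*I*(z+1/2) = 2*(Real.pi:ℂ)*I*z + (Real.pi:ℂ)*I by ring,
      Complex.exp_add, Complex.exp_pi_mul_I]
    ring
  have hnegx : cexp (-(2*(Real.pi:ℂ)*I*z)) = (cexp (2*(Real.pi:ℂ)*I*z))⁻¹ :=
    Complex.exp_neg _
  rw [exp_two_pi_eq_sq, exp_half_eq_odd, hnegx, hx', inv_neg]
  ring

lemma theta1_eq {τ : ℂ} (hτ : 0 < τ.im) (z : ℂ) :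
    JTheta1 z τ = cexp (2*(Real.pi:ℂ)*I*τ/8) * cexp ((Real.pi:ℂ)*I*z) *
      jacobiTheta₂ (z + τ/2) τ := by
  have hQn := exp_pi_I_tau_norm hτ
  have hQ0 : cexp ((Real.pi:ℂ)*I*τ) ≠ 0 := Complex.exp_ne_zero _
  set Q := cexp ((Real.pi:ℂ)*I*τ) with hQdef
  set x := cexp (2*(Real.pi:ℂ)*I*z) with hxdef
  have hx0 : x ≠ 0 := Complex.exp_ne_zero _
  have hqn : ‖Q^2‖ < 1 := by
    rw [norm_pow]; exact pow_lt_one₀ (norm_nonneg _) hQn two_ne_zero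
  have hE : cexp (2 * (Real.pi:ℂ) * I * τ) = Q^2 := by
    rw [hQdef, ← Complex.exp_nat_mul]; congr 1; push_cast; ring
  have hx'' : cexp (2*(Real.pi:ℂ)*I*(z + τ/2)) = x * Q := by
    rw [hxdef, hQdef, ← Complex.exp_add]; congr 1; ring
  -- convert the two odd products
  have hB' : (∏' n : ℕ, (1 + cexp (2 * (Real.pi:ℂ) * I * (z + τ/2)) * Q ^ (2*(n:ℤ)+1)))
      = ∏' n : ℕ, (1 + x * (Q^2) ^ (n+1)) := by
    refine tprod_congr (fun n => ?_)
    rw [hx'']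
    congr 1
    have h1 : Q * Q ^ (2*(n:ℤ)+1) = (Q^2) ^ (n+1) := by
      calc Q * Q ^ (2*(n:ℤ)+1) = Q ^ (2*(n:ℤ)+1) * Q := mul_comm _ _
      _ = Q ^ (2*(n:ℤ)+1+1) := (zpow_add_one₀ hQ0 _).symm
      _ = (Q^2) ^ (n+1) := by
          rw [← zpow_natCast (Q^2) (n+1), ← zpow_natCast Q 2, ← zpow_mul]
          congr 1
    linear_combination x * h1
  have hC' : (∏' n : ℕ, (1 + (cexp (2 * (Real.pi:ℂ) * I * (z + τ/2)))⁻¹ * Q ^ (2*(n:ℤ)+1)))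
      = ∏' n : ℕ, (1 + x⁻¹ * (Q^2) ^ n) := by
    refine tprod_congr (fun n => ?_)
    rw [hx'']
    congr 1
    have h1 : Q⁻¹ * Q ^ (2*(n:ℤ)+1) = (Q^2) ^ n := by
      have h2 : Q⁻¹ * Q ^ (2*(n:ℤ)+1) = Q ^ (2*(n:ℤ)) := by
        calc Q⁻¹ * Q ^ (2*(n:ℤ)+1) = Q⁻¹ * (Q ^ (2*(n:ℤ)) * Q) := by
              rw [← zpow_add_one₀ hQ0]
        _ = Q ^ (2*(n:ℤ)) * (Q⁻¹ * Q) := by ring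
        _ = Q ^ (2*(n:ℤ)) := by rw [inv_mul_cancel₀ hQ0, mul_one]
      rw [h2, ← zpow_natCast (Q^2) n, ← zpow_natCast Q 2, ← zpow_mul]
      norm_num
    rw [mul_inv]
    linear_combination x⁻¹ * h1
  -- multipliability on the E-side
  have hMb : Multipliable (fun n : ℕ => 1 + x * (Q^2) ^ (n+1)) :=
    (multipliable_one_add_geom (x * Q^2) (Q^2) hqn).congr
      (fun n => by rw [pow_succ]; ring)
  have hMc : Multipliable (fun n : ℕ => 1 + x⁻¹ * (Q^2) ^ (n+1)) :=
    (multipliable_one_add_geom (x⁻¹ * Q^2) (Q^2) hqn).congr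
      (fun n => by rw [pow_succ]; ring)
  have hMa := multipliable_qfac_fac hqn
  -- the shift
  have hshift : (∏' n : ℕ, (1 + x⁻¹ * (Q^2) ^ n))
      = (1 + x⁻¹) * ∏' n : ℕ, (1 + x⁻¹ * (Q^2) ^ (n+1)) := by
    have h := tprod_eq_zero_mul' (f := fun n : ℕ => 1 + x⁻¹ * (Q^2) ^ n) hMc
    simp only [pow_zero, mul_one] at h
    exact h
  -- cosine identity
  have hcos : 2 * Complex.cos ((Real.pi:ℂ) * z) = cexp ((Real.pi:ℂ)*I*z) * (1 + x⁻¹) := by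
    rw [Complex.two_cos, hxdef, ← Complex.exp_neg]
    rw [mul_add, mul_one, ← Complex.exp_add]
    congr 2 <;> ring
  -- assemble
  rw [jacobiTheta₂_eq_triple hτ (z + τ/2), hB', hC', hshift]
  simp only [JTheta1, JTheta1Factor]
  have hsplit : (∏' n : ℕ, ((1 - cexp (2 * (Real.pi:ℂ) * I * τ) ^ (n+1)) *
      (1 + cexp (2 * (Real.pi:ℂ) * I * z) * cexp (2 * (Real.pi:ℂ) * I * τ) ^ (n+1)) *
      (1 + cexp (-(2 * (Real.pi:ℂ) * I * z)) * cexp (2 * (Real.pi:ℂ) * I * τ) ^ (n+1))))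
      = (∏' n : ℕ, (1 - (Q^2) ^ (n+1))) *
        ((∏' n : ℕ, (1 + x * (Q^2) ^ (n+1))) * (∏' n : ℕ, (1 + x⁻¹ * (Q^2) ^ (n+1)))) := by
    rw [← Multipliable.tprod_mul hMb hMc, ← Multipliable.tprod_mul hMa (hMb.mul hMc)]
    refine tprod_congr (fun n => ?_)
    rw [Complex.exp_neg, hE]
    ring
  rw [hsplit]
  linear_combination (cexp (2*(Real.pi:ℂ)*I*τ/8) * (∏' n : ℕ, (1 - (Q^2) ^ (n+1))) *
    (∏' n : ℕ, (1 + x * (Q^2) ^ (n+1))) * (∏' n : ℕ, (1 + x⁻¹ * (Q^2) ^ (n+1)))) * hcos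

end JacobiTripleProduct

theorem jTheta1_S_transform (τ : ℂ) (hτ : 0 < τ.im) (v : ℂ) :
    JTheta1 v (-1 / τ) =
      (τ / I) ^ (1 / 2 : ℂ) * Complex.exp ((Real.pi : ℂ) * I * τ * v ^ 2) *
        JTheta2 (τ * v) τ := by
  have hτ0 : τ ≠ 0 := by
    intro h
    rw [h] at hτ
    simp at hτ
  have hτ' : 0 < (-1 / τ).im := by
    have him : (-1 / τ).im = τ.im / normSq τ := by
      rw [neg_div, neg_im, one_div, inv_im]
      ring
    rw [him]
    exact div_pos hτ (normSq_pos.mpr hτ0)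
  rw [theta1_eq hτ' v, theta2_eq hτ (τ * v)]
  have hper : jacobiTheta₂ (τ*v + 1/2) τ = jacobiTheta₂ (τ*v - 1/2) τ := by
    rw [show τ*v + 1/2 = (τ*v - 1/2) + 1 by ring, jacobiTheta₂_add_left]
  rw [hper, jacobiTheta₂_functional_equation (τ*v - 1/2) τ]
  rw [show (τ*v - 1/2)/τ = v + (-1/τ)/2 by field_simp; ring]
  have hbase : (-I*τ : ℂ) ≠ 0 := mul_ne_zero (neg_ne_zero.mpr I_ne_zero) hτ0
  have hcc : ((-I*τ : ℂ)) ^ ((1:ℂ)/2) ≠ 0 := by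
    rw [Complex.cpow_def_of_ne_zero hbase]
    exact Complex.exp_ne_zero _
  have h1 : (τ / I) = -I*τ := by
    rw [div_eq_mul_inv, Complex.inv_I]
    ring
  have hprod : ((-I*τ : ℂ)) ^ ((1:ℂ)/2) * (1 / ((-I*τ : ℂ)) ^ ((1:ℂ)/2)) = 1 := by
    field_simp
  have hexp : cexp (2*(Real.pi:ℂ)*I*(-1/τ)/8) * cexp ((Real.pi:ℂ)*I*v)
      = cexp ((Real.pi:ℂ)*I*τ*v^2) * cexp (-(Real.pi:ℂ)*I*(τ*v-1/2)^2/τ) := by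
    rw [← Complex.exp_add, ← Complex.exp_add]
    congr 1
    field_simp
    ring
  rw [h1]
  set J := jacobiTheta₂ (v + (-1/τ)/2) (-1/τ) with hJ
  set c := ((-I*τ : ℂ)) ^ ((1:ℂ)/2) with hc
  set e1 := cexp ((Real.pi:ℂ)*I*τ*v^2) with he1
  set e2 := cexp (-(Real.pi:ℂ)*I*(τ*v-1/2)^2/τ) with he2
  -- goal : cexp (2π I (-1/τ)/8) * cexp(π I v) * J = c * e1 * (1/c * e2 * J)
  linear_combination J * hexp - e1 * e2 * J * hprod
end

section
/- For every τ in the upper half-plane ℍ and every v ∈ ℂ, the v-derivative of the Jacobi theta function θ satisfies θ'(v, −1/τ) = (1/i) · (τ/i)^{1/2} · e^{πiτv²} · (2πiτv·θ(τv, τ) + τ·θ'(τv, τ)). -/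
open Complex Filter Finset Topology Real

set_option maxHeartbeats 1000000

namespace JTP

lemma hasProd_zero_of_exists {g : ℕ → ℂ} {n0 : ℕ} (h : g n0 = 0) : HasProd g 0 := by
  have hev : ∀ᶠ s : Finset ℕ in atTop, (0 : ℂ) = ∏ i ∈ s, g i := by
    refine eventually_atTop.mpr ⟨{n0}, fun s hs => ?_⟩
    exact (Finset.prod_eq_zero (Finset.singleton_subset_iff.mp hs) h).symm
  exact Tendsto.congr' hev tendsto_const_nhds

lemma summable_norm_log_one_add {f : ℕ → ℂ} (hf : Summable fun n => ‖f n‖) :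
    Summable fun n => ‖Complex.log (1 + f n)‖ := by
  have h0 : Tendsto (fun n => ‖f n‖) atTop (𝓝 0) := hf.tendsto_atTop_zero
  refine Summable.of_norm_bounded_eventually_nat (hf.mul_left (3/2)) ?_
  filter_upwards [h0.eventually (gt_mem_nhds (by norm_num : (0:ℝ) < 1/2))] with n hn
  rw [norm_norm]
  exact Complex.norm_log_one_add_half_le_self hn.le

lemma hasProd_one_add_of_ne {f : ℕ → ℂ} (hf : Summable fun n => ‖f n‖)
    (hne : ∀ n, 1 + f n ≠ 0) :
    HasProd (fun n => 1 + f n) (∏' n, (1 + f n)) := by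
  have hs : Summable fun n => Complex.log (1 + f n) :=
    (summable_norm_log_one_add hf).of_norm
  exact (Complex.hasProd_of_hasSum_log (f := fun n => 1 + f n) hne
    hs.hasSum).multipliable.hasProd

lemma tprod_one_add_eq {f : ℕ → ℂ} (hf : Summable fun n => ‖f n‖)
    (hne : ∀ n, 1 + f n ≠ 0) :
    (∏' n, (1 + f n)) = cexp (∑' n, Complex.log (1 + f n)) := by
  have hs : Summable fun n => Complex.log (1 + f n) :=
    (summable_norm_log_one_add hf).of_norm
  have := Complex.cexp_tsum_eq_tprod (f := fun n => 1 + f n)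
    hne hs
  exact this.symm

lemma multipliable_one_add {f : ℕ → ℂ} (hf : Summable fun n => ‖f n‖) :
    Multipliable (fun n => 1 + f n) := by
  by_cases h : ∀ n, 1 + f n ≠ 0
  · exact (hasProd_one_add_of_ne hf h).multipliable
  · push_neg at h
    obtain ⟨n0, h0⟩ := h
    exact (hasProd_zero_of_exists h0).multipliable

lemma norm_prod_ge {f : ℕ → ℂ} (hf : Summable fun n => ‖f n‖)
    (hne : ∀ n, 1 + f n ≠ 0) (s : Finset ℕ) :
    Real.exp (-(∑' n, ‖Complex.log (1 + f n)‖)) ≤ ‖∏ i ∈ s, (1 + f i)‖ := by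
  have hs := summable_norm_log_one_add hf
  have h1 : ∏ i ∈ s, (1 + f i) = cexp (∑ i ∈ s, Complex.log (1 + f i)) := by
    rw [Complex.exp_sum]
    exact Finset.prod_congr rfl fun i _ => (Complex.exp_log (hne i)).symm
  rw [h1, Complex.norm_exp]
  apply Real.exp_le_exp.mpr
  have h2 : ‖∑ i ∈ s, Complex.log (1 + f i)‖ ≤ ∑' n, ‖Complex.log (1 + f n)‖ := by
    refine le_trans (norm_sum_le _ _) ?_
    exact Summable.sum_le_tsum s (fun n _ => norm_nonneg _) hs
  have h3 := abs_le.mp ((Complex.abs_re_le_norm (∑ i ∈ s, Complex.log (1 + f i))).trans h2)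
  linarith [h3.1]

lemma norm_prod_le {f : ℕ → ℂ} (hf : Summable fun n => ‖f n‖)
    (hne : ∀ n, 1 + f n ≠ 0) (s : Finset ℕ) :
    ‖∏ i ∈ s, (1 + f i)‖ ≤ Real.exp (∑' n, ‖Complex.log (1 + f n)‖) := by
  have hs := summable_norm_log_one_add hf
  have h1 : ∏ i ∈ s, (1 + f i) = cexp (∑ i ∈ s, Complex.log (1 + f i)) := by
    rw [Complex.exp_sum]
    exact Finset.prod_congr rfl fun i _ => (Complex.exp_log (hne i)).symm
  rw [h1, Complex.norm_exp]
  apply Real.exp_le_exp.mpr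
  have h2 : ‖∑ i ∈ s, Complex.log (1 + f i)‖ ≤ ∑' n, ‖Complex.log (1 + f n)‖ := by
    refine le_trans (norm_sum_le _ _) ?_
    exact Summable.sum_le_tsum s (fun n _ => norm_nonneg _) hs
  have h3 := abs_le.mp ((Complex.abs_re_le_norm (∑ i ∈ s, Complex.log (1 + f i))).trans h2)
  linarith [h3.2]

lemma tprod_ne_zero {f : ℕ → ℂ} (hf : Summable fun n => ‖f n‖)
    (hne : ∀ n, 1 + f n ≠ 0) : (∏' n, (1 + f n)) ≠ 0 := by
  rw [tprod_one_add_eq hf hne]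
  exact Complex.exp_ne_zero _


/-! ### q-Pochhammer and Gaussian binomials -/

noncomputable def Q (t : ℂ) (m : ℕ) : ℂ := ∏ j ∈ Finset.range m, (1 - t ^ (j + 1))

noncomputable def qb (t : ℂ) (m k : ℕ) : ℂ :=
  if k ≤ m then Q t m / (Q t k * Q t (m - k)) else 0

lemma one_sub_pow_ne {t : ℂ} (ht : ‖t‖ < 1) (j : ℕ) : (1 : ℂ) - t ^ (j + 1) ≠ 0 := by
  intro h
  have h1 : t ^ (j + 1) = 1 := by linear_combination -h
  have : ‖t ^ (j + 1)‖ < 1 := by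
    rw [norm_pow]
    exact pow_lt_one₀ (norm_nonneg t) ht (Nat.succ_ne_zero j)
  rw [h1] at this
  simp at this

lemma Q_ne {t : ℂ} (ht : ‖t‖ < 1) (m : ℕ) : Q t m ≠ 0 :=
  Finset.prod_ne_zero_iff.mpr fun j _ => one_sub_pow_ne ht j

lemma Q_zero (t : ℂ) : Q t 0 = 1 := by simp [Q]

lemma Q_succ (t : ℂ) (m : ℕ) : Q t (m + 1) = Q t m * (1 - t ^ (m + 1)) :=
  Finset.prod_range_succ _ m

lemma qb_zero {t : ℂ} (ht : ‖t‖ < 1) (m : ℕ) : qb t m 0 = 1 := by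
  rw [qb, if_pos (Nat.zero_le m), Q_zero, Nat.sub_zero, one_mul, div_self (Q_ne ht m)]

lemma qb_self {t : ℂ} (ht : ‖t‖ < 1) (m : ℕ) : qb t m m = 1 := by
  rw [qb, if_pos le_rfl, Nat.sub_self, Q_zero, mul_one, div_self (Q_ne ht m)]

lemma qb_of_gt {t : ℂ} {m k : ℕ} (h : m < k) : qb t m k = 0 := by
  rw [qb, if_neg (by omega)]

/-- Pascal-type recurrence for Gaussian binomials. -/
lemma qb_pascal {t : ℂ} (ht : ‖t‖ < 1) {m k : ℕ} (hk : k ≤ m) :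
    qb t (m + 1) (k + 1) = qb t m (k + 1) + t ^ (m - k) * qb t m k := by
  rcases eq_or_lt_of_le hk with rfl | hlt
  · rw [qb_self ht, qb_of_gt (Nat.lt_succ_self k), Nat.sub_self, pow_zero, qb_self ht]
    ring
  · have hk1 : k + 1 ≤ m := hlt
    obtain ⟨r, hr⟩ : ∃ r, m - k = r + 1 := ⟨m - k - 1, by omega⟩
    rw [qb, if_pos (by omega : k + 1 ≤ m + 1), qb, if_pos hk1, qb, if_pos hk,
      show m + 1 - (k + 1) = r + 1 by omega, show m - (k + 1) = r by omega, hr,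
      Q_succ t m, Q_succ t r, Q_succ t k]
    have h1 := Q_ne ht m
    have h2 := Q_ne ht k
    have h3 := Q_ne ht r
    have h4 := one_sub_pow_ne ht k
    have h5 := one_sub_pow_ne ht r
    have h6 : t ^ (r + 1) * t ^ (k + 1) = t ^ (m + 1) := by
      rw [← pow_add]; congr 1; omega
    rw [← mul_div_assoc,
      div_add_div _ _ (mul_ne_zero (mul_ne_zero h2 h4) h3) (mul_ne_zero h2 (mul_ne_zero h3 h5)),
      div_eq_div_iff (mul_ne_zero (mul_ne_zero h2 h4) (mul_ne_zero h3 h5))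
        (mul_ne_zero (mul_ne_zero (mul_ne_zero h2 h4) h3) (mul_ne_zero h2 (mul_ne_zero h3 h5)))]
    linear_combination (Q t m * Q t k ^ 2 * Q t r ^ 2 * (1 - t ^ (k + 1)) *
      (1 - t ^ (r + 1))) * h6

/-- The Gauss q-binomial theorem. -/
lemma gauss_qbinom {t : ℂ} (ht : ‖t‖ < 1) (z : ℂ) (m : ℕ) :
    ∏ j ∈ Finset.range m, (1 + z * t ^ j) =
      ∑ k ∈ Finset.range (m + 1), qb t m k * t ^ (k.choose 2) * z ^ k := by
  induction m with
  | zero => simp [qb_zero ht]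
  | succ m ih =>
    have hchoose : ∀ k : ℕ, (k + 1).choose 2 = k.choose 2 + k := by
      intro k
      rw [Nat.choose_succ_succ, Nat.choose_one_right, Nat.add_comm]
    rw [Finset.prod_range_succ, ih,
      Finset.sum_range_succ' (fun k => qb t (m + 1) k * t ^ (k.choose 2) * z ^ k) (m + 1)]
    have hstep : ∀ k ∈ Finset.range (m + 1),
        qb t (m + 1) (k + 1) * t ^ ((k + 1).choose 2) * z ^ (k + 1)
        = qb t m (k + 1) * t ^ ((k + 1).choose 2) * z ^ (k + 1)
          + qb t m k * t ^ (k.choose 2) * z ^ k * (z * t ^ m) := by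
      intro k hk
      have hk' : k ≤ m := Nat.lt_succ_iff.mp (Finset.mem_range.mp hk)
      rw [qb_pascal ht hk', hchoose k]
      have hpow : t ^ (m - k) * t ^ (k.choose 2 + k) = t ^ (k.choose 2) * t ^ m := by
        rw [← pow_add, ← pow_add]; congr 1; omega
      linear_combination (qb t m k * z ^ (k + 1)) * hpow
    rw [Finset.sum_congr rfl hstep, Finset.sum_add_distrib]
    have h2 : (∑ k ∈ Finset.range (m + 1), qb t m (k + 1) * t ^ ((k + 1).choose 2) * z ^ (k + 1))
        + qb t (m + 1) 0 * t ^ (Nat.choose 0 2) * z ^ 0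
        = ∑ k ∈ Finset.range (m + 1), qb t m k * t ^ (k.choose 2) * z ^ k := by
      rw [qb_zero ht]
      have h3 := Finset.sum_range_succ' (fun k => qb t m k * t ^ (k.choose 2) * z ^ k) (m + 1)
      rw [Finset.sum_range_succ (fun k => qb t m k * t ^ (k.choose 2) * z ^ k) (m + 1),
        qb_of_gt (Nat.lt_succ_self m)] at h3
      simp only [qb_zero ht] at h3
      simp only [Nat.choose] at h3 ⊢
      rw [← h3]
      ring
    have h4 : ∑ k ∈ Finset.range (m + 1),
        qb t m k * t ^ (k.choose 2) * z ^ k * (z * t ^ m)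
        = (∑ k ∈ Finset.range (m + 1), qb t m k * t ^ (k.choose 2) * z ^ k) * (z * t ^ m) :=
      (Finset.sum_mul _ _ _).symm
    rw [add_right_comm, h2, h4]
    ring

/-! ### Finite triple product -/

lemma prod_zpow_range {a : ℂ} (ha : a ≠ 0) (f : ℕ → ℤ) (N : ℕ) :
    ∏ j ∈ Finset.range N, a ^ (f j) = a ^ (∑ j ∈ Finset.range N, f j) := by
  induction N with
  | zero => simp
  | succ N ih => rw [Finset.prod_range_succ, Finset.sum_range_succ, ih, zpow_add₀ ha]

lemma sum_odd_int (N : ℕ) : ∑ j ∈ Finset.range N, (2 * (j : ℤ) + 1 - 2 * N) = -(N : ℤ) ^ 2 := by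
  induction N with
  | zero => simp
  | succ N ih =>
    rw [Finset.sum_range_succ]
    have : ∑ j ∈ Finset.range N, (2 * (j : ℤ) + 1 - 2 * (N + 1 : ℕ))
        = ∑ j ∈ Finset.range N, ((2 * (j : ℤ) + 1 - 2 * N) + (-2)) := by
      refine Finset.sum_congr rfl fun j _ => ?_
      push_cast; ring
    rw [this, Finset.sum_add_distrib, ih, Finset.sum_const, Finset.card_range]
    push_cast; ring

lemma two_mul_choose_two (k : ℕ) : (2 * (k.choose 2) : ℤ) = (k : ℤ) ^ 2 - k := by
  induction k with
  | zero => simp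
  | succ k ih =>
    rw [Nat.choose_succ_succ, Nat.choose_one_right]
    push_cast at ih ⊢
    ring_nf at ih ⊢
    omega

lemma finite_triple {p x : ℂ} (hp : ‖p‖ < 1) (hp0 : p ≠ 0) (hx : x ≠ 0) (N : ℕ) :
    (∏ j ∈ Finset.range N, (1 + x * p ^ (2 * j + 1))) *
      (∏ j ∈ Finset.range N, (1 + x⁻¹ * p ^ (2 * j + 1)))
    = ∑ k ∈ Finset.range (2 * N + 1),
        qb (p ^ 2) (2 * N) k * p ^ (((k : ℤ) - N) ^ 2) * x ^ ((k : ℤ) - N) := by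
  have ht : ‖p ^ 2‖ < 1 := by
    rw [norm_pow]
    exact pow_lt_one₀ (norm_nonneg p) hp two_ne_zero
  have hg := gauss_qbinom ht (x * p ^ ((1 : ℤ) - 2 * N)) (2 * N)
  -- rewrite the left side of hg
  have hpow : ∀ j : ℕ, ((p ^ 2) ^ j : ℂ) = p ^ ((2 * j : ℕ) : ℤ) := by
    intro j
    rw [← pow_mul, zpow_natCast]
  have hL : ∏ j ∈ Finset.range (2 * N), (1 + (x * p ^ ((1 : ℤ) - 2 * N)) * (p ^ 2) ^ j)
      = (p ^ (-((N : ℤ) ^ 2)) * x ^ (N : ℕ)) *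
        ((∏ j ∈ Finset.range N, (1 + x⁻¹ * p ^ (2 * j + 1))) *
         (∏ j ∈ Finset.range N, (1 + x * p ^ (2 * j + 1)))) := by
    rw [two_mul, Finset.prod_range_add]
    have hA : ∀ j ∈ Finset.range N, (1 + (x * p ^ ((1 : ℤ) - 2 * N)) * (p ^ 2) ^ j)
        = p ^ (2 * (j : ℤ) + 1 - 2 * N) * (p ^ (2 * ((N : ℤ) - 1 - j) + 1) + x) := by
      intro j hj
      rw [hpow j]
      have h1 : p ^ (2 * (j : ℤ) + 1 - 2 * N) * p ^ (2 * ((N : ℤ) - 1 - j) + 1) = 1 := by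
        rw [← zpow_add₀ hp0, show (2 * (j : ℤ) + 1 - 2 * N) + (2 * ((N : ℤ) - 1 - j) + 1) = 0 by ring, zpow_zero]
      have h2 : x * p ^ ((1 : ℤ) - 2 * N) * p ^ ((2 * j : ℕ) : ℤ)
          = x * p ^ (2 * (j : ℤ) + 1 - 2 * N) := by
        rw [mul_assoc, ← zpow_add₀ hp0]
        congr 2
        push_cast; ring
      rw [h2]
      linear_combination -h1
    have hB : ∀ j ∈ Finset.range N, (1 + (x * p ^ ((1 : ℤ) - 2 * N)) * (p ^ 2) ^ (N + j))
        = 1 + x * p ^ (2 * j + 1) := by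
      intro j hj
      rw [hpow (N + j)]
      congr 1
      rw [mul_assoc, ← zpow_add₀ hp0, show ((1 : ℤ) - 2 * N) + ((2 * (N + j) : ℕ) : ℤ) = ((2 * j + 1 : ℕ) : ℤ) by push_cast; ring, zpow_natCast]
    rw [Finset.prod_congr rfl hA, Finset.prod_congr rfl hB, Finset.prod_mul_distrib,
      prod_zpow_range hp0, sum_odd_int]
    -- now handle ∏ (p ^ (2 * (N - 1 - j) + 1) + x)
    have hC : ∏ j ∈ Finset.range N, (p ^ (2 * ((N : ℤ) - 1 - j) + 1) + x)
        = ∏ j ∈ Finset.range N, (p ^ (2 * (j : ℤ) + 1) + x) := by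
      rw [← Finset.prod_range_reflect (fun j => (p ^ (2 * (j : ℤ) + 1) + x)) N]
      refine Finset.prod_congr rfl fun j hj => ?_
      have hjN := Finset.mem_range.mp hj
      congr 2
      push_cast [Nat.cast_sub (by omega : j + 1 ≤ N)]
      ring_nf
      omega
    have hD : ∀ j ∈ Finset.range N, (p ^ (2 * (j : ℤ) + 1) + x)
        = x * (1 + x⁻¹ * p ^ (2 * j + 1)) := by
      intro j hj
      have : ((2 * j + 1 : ℕ) : ℤ) = 2 * (j : ℤ) + 1 := by push_cast; ring
      rw [← this, zpow_natCast]
      field_simp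
      ring
    rw [hC, Finset.prod_congr rfl hD, Finset.prod_mul_distrib, Finset.prod_const,
      Finset.card_range]
    ring
  rw [hL] at hg
  -- solve for the product
  have hxN : (x : ℂ) ^ (N : ℕ) ≠ 0 := pow_ne_zero _ hx
  have hpN : (p : ℂ) ^ (-((N : ℤ) ^ 2)) ≠ 0 := zpow_ne_zero _ hp0
  have hmain : (∏ j ∈ Finset.range N, (1 + x⁻¹ * p ^ (2 * j + 1))) *
      (∏ j ∈ Finset.range N, (1 + x * p ^ (2 * j + 1)))
      = p ^ ((N : ℤ) ^ 2) * x ^ (-(N : ℤ)) *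
        ∑ k ∈ Finset.range (2 * N + 1),
          qb (p ^ 2) (2 * N) k * (p ^ 2) ^ (k.choose 2) * (x * p ^ ((1 : ℤ) - 2 * N)) ^ k := by
    rw [← hg]
    have h1 : p ^ ((N : ℤ) ^ 2) * p ^ (-((N : ℤ) ^ 2)) = 1 := by
      rw [← zpow_add₀ hp0]; simp
    have h2 : x ^ (-(N : ℤ)) * x ^ (N : ℕ) = 1 := by
      rw [← zpow_natCast x N, ← zpow_add₀ hx]; simp
    calc (∏ j ∈ Finset.range N, (1 + x⁻¹ * p ^ (2 * j + 1))) *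
          (∏ j ∈ Finset.range N, (1 + x * p ^ (2 * j + 1)))
        = (p ^ ((N : ℤ) ^ 2) * p ^ (-((N : ℤ) ^ 2))) * ((x ^ (-(N : ℤ)) * x ^ (N : ℕ))) *
          ((∏ j ∈ Finset.range N, (1 + x⁻¹ * p ^ (2 * j + 1))) *
           (∏ j ∈ Finset.range N, (1 + x * p ^ (2 * j + 1)))) := by rw [h1, h2]; ring
      _ = _ := by ring
  rw [mul_comm (∏ j ∈ Finset.range N, (1 + x * p ^ (2 * j + 1))), hmain, Finset.mul_sum]
  refine Finset.sum_congr rfl fun k hk => ?_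
  have hterm : (p ^ 2) ^ (k.choose 2) = p ^ ((k : ℤ) ^ 2 - k) := by
    rw [← pow_mul, ← zpow_natCast p, show ((2 * k.choose 2 : ℕ) : ℤ) = (k : ℤ) ^ 2 - k from two_mul_choose_two k]
  have hxk : (x * p ^ ((1 : ℤ) - 2 * N)) ^ k = x ^ (k : ℤ) * p ^ (((1 : ℤ) - 2 * N) * k) := by
    rw [mul_pow, ← zpow_natCast x, ← zpow_natCast (p ^ ((1 : ℤ) - 2 * N)), ← zpow_mul]
  rw [hterm, hxk,
    show (((k : ℤ) - N) ^ 2 : ℤ) = (N : ℤ) ^ 2 + (((k : ℤ) ^ 2 - k) + ((1 : ℤ) - 2 * N) * k) by ring,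
    show ((k : ℤ) - N) = -(N : ℤ) + k by ring,
    zpow_add₀ hp0, zpow_add₀ hp0, zpow_add₀ hx]
  ring

/-! ### Infinite triple product -/

lemma summable_norm_mul_geom {w : ℂ} (c : ℂ) (hw : ‖w‖ < 1) (a b : ℕ) (ha : a ≠ 0) :
    Summable fun j : ℕ => ‖c * w ^ (a * j + b)‖ := by
  have h1 : Summable fun j : ℕ => ‖c‖ * ‖w‖ ^ b * (‖w‖ ^ a) ^ j :=
    (summable_geometric_of_lt_one (pow_nonneg (norm_nonneg w) a)
      (pow_lt_one₀ (norm_nonneg w) hw ha)).mul_left _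
  refine h1.congr fun j => ?_
  rw [norm_mul, norm_pow, pow_add, pow_mul]
  ring

lemma mult_one_add_geom {w : ℂ} (c : ℂ) (hw : ‖w‖ < 1) (a b : ℕ) (ha : a ≠ 0) :
    Multipliable fun j : ℕ => 1 + c * w ^ (a * j + b) :=
  multipliable_one_add (summable_norm_mul_geom c hw a b ha)

lemma mult_one_sub_pow {t : ℂ} (ht : ‖t‖ < 1) :
    Multipliable fun j : ℕ => 1 - t ^ (j + 1) := by
  refine (mult_one_add_geom (-1) ht 1 1 one_ne_zero).congr fun j => ?_
  rw [one_mul]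
  ring

lemma summable_sq_geom {r R : ℝ} (hr0 : 0 ≤ r) (hr : r < 1) (hR : 0 ≤ R) :
    Summable fun n : ℕ => r ^ (n ^ 2) * R ^ n := by
  have h0 : Filter.Tendsto (fun n : ℕ => r ^ n * R) Filter.atTop (nhds (0 * R)) :=
    (tendsto_pow_atTop_nhds_zero_of_lt_one hr0 hr).mul_const R
  rw [zero_mul] at h0
  have h1 : ∀ᶠ n : ℕ in Filter.atTop, r ^ n * R ≤ 1 := by
    filter_upwards [h0.eventually (gt_mem_nhds (by norm_num : (0:ℝ) < 1))] with n hn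
    exact hn.le
  refine Summable.of_norm_bounded_eventually_nat
    (summable_geometric_of_lt_one hr0 hr) ?_
  obtain ⟨n0, hn0⟩ := Filter.eventually_atTop.mp h1
  refine Filter.eventually_atTop.mpr ⟨n0 + 1, fun n hn => ?_⟩
  have hn1 : 1 ≤ n := by omega
  have key : r ^ (n ^ 2) * R ^ n = r ^ n * (r ^ (n - 1) * R) ^ n := by
    rw [mul_pow, ← pow_mul, ← mul_assoc, ← pow_add]
    congr 2
    cases n with
    | zero => omega
    | succ m => simp [Nat.succ_sub_one]; ring
  rw [Real.norm_eq_abs, _root_.abs_of_nonneg (mul_nonneg (pow_nonneg hr0 _) (pow_nonneg hR _)),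
    key]
  have h2 : (r ^ (n - 1) * R) ^ n ≤ 1 :=
    pow_le_one₀ (mul_nonneg (pow_nonneg hr0 _) hR) (hn0 (n - 1) (by omega))
  have h3 := mul_le_mul_of_nonneg_left h2 (pow_nonneg hr0 n)
  simpa using h3

theorem triple_product {p x : ℂ} (hp : ‖p‖ < 1) (hp0 : p ≠ 0) (hx : x ≠ 0) :
    (∏' j : ℕ, (1 - (p ^ 2) ^ (j + 1))) * ((∏' j : ℕ, (1 + x * p ^ (2 * j + 1))) *
      (∏' j : ℕ, (1 + x⁻¹ * p ^ (2 * j + 1))))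
    = ∑' n : ℤ, p ^ ((n : ℤ) ^ 2) * x ^ (n : ℤ) := by
  classical
  set t : ℂ := p ^ 2 with htdef
  have ht : ‖t‖ < 1 := by
    rw [htdef, norm_pow]
    exact pow_lt_one₀ (norm_nonneg p) hp two_ne_zero
  -- multipliability
  have hfQ : Summable fun j : ℕ => ‖(-1 : ℂ) * t ^ (1 * j + 1)‖ :=
    summable_norm_mul_geom (-1) ht 1 1 one_ne_zero
  have hfQ' : Summable fun j : ℕ => ‖(fun j : ℕ => -(t ^ (j + 1))) j‖ := by
    refine hfQ.congr fun j => ?_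
    rw [one_mul]
    congr 1
    ring
  have hQne : ∀ j : ℕ, 1 + (fun j : ℕ => -(t ^ (j + 1))) j ≠ 0 := by
    intro j
    have := one_sub_pow_ne ht j
    simpa [sub_eq_add_neg] using this
  have hQform : ∀ m : ℕ, Q t m = ∏ i ∈ Finset.range m, (1 + -(t ^ (i + 1))) :=
    fun m => Finset.prod_congr rfl fun i _ => by ring
  set L : ℝ := ∑' n : ℕ, ‖Complex.log (1 + -(t ^ (n + 1)))‖ with hLdef
  have hQlow : ∀ m : ℕ, Real.exp (-L) ≤ ‖Q t m‖ := by
    intro m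
    rw [hQform m]
    exact norm_prod_ge hfQ' hQne (Finset.range m)
  have hQhigh : ∀ m : ℕ, ‖Q t m‖ ≤ Real.exp L := by
    intro m
    rw [hQform m]
    exact norm_prod_le hfQ' hQne (Finset.range m)
  -- bound on qb
  set Cb : ℝ := Real.exp L * (Real.exp L * Real.exp L) with hCbdef
  have hCb0 : 0 ≤ Cb := by positivity
  have hqb_bound : ∀ m k : ℕ, ‖qb t m k‖ ≤ Cb := by
    intro m k
    rw [qb]
    split_ifs with h
    · rw [norm_div, norm_mul]
      have h1 := hQlow k
      have h2 := hQlow (m - k)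
      have h3 := hQhigh m
      have he : (0:ℝ) < Real.exp (-L) := Real.exp_pos _
      have hd : Real.exp (-L) * Real.exp (-L) ≤ ‖Q t k‖ * ‖Q t (m - k)‖ :=
        mul_le_mul h1 h2 he.le (norm_nonneg _)
      have hd0 : (0:ℝ) < Real.exp (-L) * Real.exp (-L) := by positivity
      calc ‖Q t m‖ / (‖Q t k‖ * ‖Q t (m - k)‖)
          ≤ Real.exp L / (Real.exp (-L) * Real.exp (-L)) :=
            div_le_div₀ (Real.exp_pos L).le h3 hd0 hd
        _ = Cb := by
            rw [hCbdef, Real.exp_neg]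
            field_simp
    · simpa using hCb0
  -- limits of Q
  have hM1 : Multipliable fun j : ℕ => 1 - t ^ (j + 1) := mult_one_sub_pow ht
  set QI : ℂ := ∏' j : ℕ, (1 - t ^ (j + 1)) with hQIdef
  have hQI_ne : QI ≠ 0 := by
    have := tprod_ne_zero hfQ' hQne
    rw [hQIdef]
    convert this using 2 with j
    funext j; ring
  have hQtend : Filter.Tendsto (fun m => Q t m) Filter.atTop (nhds QI) :=
    hM1.hasProd.tendsto_prod_nat
  -- pointwise limit of coefficients
  have hcoeff : ∀ n : ℤ, Filter.Tendsto
      (fun N : ℕ => qb t (2 * N) ((n + N).toNat)) Filter.atTop (nhds QI⁻¹) := by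
    intro n
    have l1 : Filter.Tendsto (fun N : ℕ => 2 * N) Filter.atTop Filter.atTop :=
      Filter.tendsto_atTop_atTop.mpr fun b => ⟨b, fun m hm => by omega⟩
    have l2 : Filter.Tendsto (fun N : ℕ => (n + N).toNat) Filter.atTop Filter.atTop :=
      Filter.tendsto_atTop_atTop.mpr fun b => ⟨b + n.natAbs, fun m hm => by omega⟩
    have l3 : Filter.Tendsto (fun N : ℕ => 2 * N - (n + N).toNat) Filter.atTop Filter.atTop :=
      Filter.tendsto_atTop_atTop.mpr fun b => ⟨b + n.natAbs, fun m hm => by omega⟩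
    have hdiv : Filter.Tendsto
        (fun N : ℕ => Q t (2 * N) / (Q t ((n + N).toNat) * Q t (2 * N - (n + N).toNat)))
        Filter.atTop (nhds (QI / (QI * QI))) :=
      (hQtend.comp l1).div ((hQtend.comp l2).mul (hQtend.comp l3))
        (mul_ne_zero hQI_ne hQI_ne)
    have hval : QI / (QI * QI) = QI⁻¹ := by field_simp
    rw [hval] at hdiv
    refine hdiv.congr' ?_
    filter_upwards [Filter.eventually_atTop.mpr ⟨n.natAbs, fun m hm => hm⟩] with N hN
    rw [qb, if_pos (by omega)]
  -- dominated convergence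
  set R : ℝ := max ‖x‖ ‖x⁻¹‖ with hRdef
  have hR0 : 0 ≤ R := le_trans (norm_nonneg x) (le_max_left _ _)
  have hxz : ∀ n : ℤ, ‖x ^ (n : ℤ)‖ ≤ R ^ n.natAbs := by
    intro n
    cases n with
    | ofNat m =>
      rw [Int.ofNat_eq_coe, zpow_natCast, norm_pow]
      exact pow_le_pow_left₀ (norm_nonneg x) (le_max_left _ _) m
    | negSucc m =>
      rw [zpow_negSucc, norm_inv, norm_pow, ← inv_pow, ← norm_inv]
      exact pow_le_pow_left₀ (norm_nonneg _) (le_max_right _ _) (m + 1)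
  have hpz : ∀ n : ℤ, ‖p ^ ((n : ℤ) ^ 2)‖ = ‖p‖ ^ (n.natAbs ^ 2) := by
    intro n
    rw [norm_zpow, show ((n : ℤ) ^ 2) = ((n.natAbs ^ 2 : ℕ) : ℤ) by
      push_cast [Int.natAbs_sq]; exact (_root_.sq_abs n).symm, zpow_natCast]
  set f : ℕ → ℤ → ℂ := fun N n =>
    (if n.natAbs ≤ N then qb t (2 * N) ((n + N).toNat) else 0) * (p ^ ((n : ℤ) ^ 2) * x ^ (n : ℤ))
    with hfdef
  set g : ℤ → ℂ := fun n => QI⁻¹ * (p ^ ((n : ℤ) ^ 2) * x ^ (n : ℤ)) with hgdef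
  set bound : ℤ → ℝ := fun n => Cb * (‖p‖ ^ (n.natAbs ^ 2) * R ^ n.natAbs) with hbdef
  have h_sum : Summable bound := by
    have hnat : Summable fun m : ℕ => Cb * (‖p‖ ^ (m ^ 2) * R ^ m) :=
      (summable_sq_geom (norm_nonneg p) hp hR0).mul_left Cb
    refine Summable.of_nat_of_neg ?_ ?_ <;>
      · refine hnat.congr fun m => ?_
        simp [hbdef]
  have hab : ∀ n : ℤ, Filter.Tendsto (fun N => f N n) Filter.atTop (nhds (g n)) := by
    intro n
    have h1 := (hcoeff n).mul_const (p ^ ((n : ℤ) ^ 2) * x ^ (n : ℤ))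
    refine h1.congr' ?_
    filter_upwards [Filter.eventually_atTop.mpr ⟨n.natAbs, fun m hm => hm⟩] with N hN
    rw [hfdef]
    simp only [if_pos hN]
  have h_bound : ∀ᶠ N : ℕ in Filter.atTop, ∀ n : ℤ, ‖f N n‖ ≤ bound n := by
    refine Filter.Eventually.of_forall fun N n => ?_
    rw [hfdef, hbdef]
    simp only
    rw [norm_mul, norm_mul, hpz n]
    have hc : ‖(if n.natAbs ≤ N then qb t (2 * N) ((n + N).toNat) else 0 : ℂ)‖ ≤ Cb := by
      split_ifs with h
      · exact hqb_bound _ _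
      · simpa using hCb0
    refine mul_le_mul hc (mul_le_mul le_rfl (hxz n) (norm_nonneg _) (pow_nonneg (norm_nonneg p) _))
      (by positivity) hCb0
  have hdom := tendsto_tsum_of_dominated_convergence h_sum hab h_bound
  -- identify the finite sums
  have hfin : ∀ N : ℕ, (∑' n : ℤ, f N n) =
      (∏ j ∈ Finset.range N, (1 + x * p ^ (2 * j + 1))) *
        (∏ j ∈ Finset.range N, (1 + x⁻¹ * p ^ (2 * j + 1))) := by
    intro N
    rw [finite_triple hp hp0 hx N]
    have hsupp : ∀ n : ℤ, n ∉ Finset.Icc (-(N : ℤ)) N → f N n = 0 := by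
      intro n hn
      rw [hfdef]
      simp only
      rw [if_neg (by simp [Finset.mem_Icc] at hn; omega)]
      ring
    rw [tsum_eq_sum hsupp]
    refine Finset.sum_nbij' (fun n => (n + N).toNat) (fun k => (k : ℤ) - N) ?_ ?_ ?_ ?_ ?_
    · intro n hn
      simp only [Finset.mem_Icc] at hn
      simp only [Finset.mem_range]
      omega
    · intro k hk
      simp only [Finset.mem_range] at hk
      simp only [Finset.mem_Icc]
      omega
    · intro n hn
      simp only [Finset.mem_Icc] at hn
      omega
    · intro k hk
      simp only [Finset.mem_range] at hk
      omega
    · intro n hn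
      simp only [Finset.mem_Icc] at hn
      have he : (((n + N).toNat : ℤ)) = n + N := by omega
      rw [hfdef]
      dsimp only
      rw [if_pos (by omega : n.natAbs ≤ N), he,
        show (n + (N : ℤ)) - N = n by ring, htdef]
      ring
  -- limit of products
  have hM2 : Multipliable fun j : ℕ => 1 + x * p ^ (2 * j + 1) :=
    mult_one_add_geom x hp 2 1 two_ne_zero
  have hM3 : Multipliable fun j : ℕ => 1 + x⁻¹ * p ^ (2 * j + 1) :=
    mult_one_add_geom x⁻¹ hp 2 1 two_ne_zero
  have hprodtend : Filter.Tendsto (fun N : ℕ =>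
      (∏ j ∈ Finset.range N, (1 + x * p ^ (2 * j + 1))) *
        (∏ j ∈ Finset.range N, (1 + x⁻¹ * p ^ (2 * j + 1)))) Filter.atTop
      (nhds ((∏' j : ℕ, (1 + x * p ^ (2 * j + 1))) * (∏' j : ℕ, (1 + x⁻¹ * p ^ (2 * j + 1))))) :=
    (hM2.hasProd.tendsto_prod_nat).mul (hM3.hasProd.tendsto_prod_nat)
  have heq : (∏' j : ℕ, (1 + x * p ^ (2 * j + 1))) * (∏' j : ℕ, (1 + x⁻¹ * p ^ (2 * j + 1)))
      = ∑' n : ℤ, g n := by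
    refine tendsto_nhds_unique hprodtend ?_
    refine hdom.congr fun N => ?_
    exact (hfin N)
  have hgsum : (∑' n : ℤ, g n) = QI⁻¹ * ∑' n : ℤ, p ^ ((n : ℤ) ^ 2) * x ^ (n : ℤ) := by
    rw [hgdef]
    exact tsum_mul_left
  rw [← hQIdef] at *
  rw [heq, hgsum, ← mul_assoc]
  rw [mul_inv_cancel₀ hQI_ne, one_mul]

/-! ### Bridge to jacobiTheta₂ -/

lemma norm_exp_pi_I_tau_lt_one {τ : ℂ} (hτ : 0 < τ.im) : ‖cexp ((π : ℂ) * I * τ)‖ < 1 := by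
  rw [Complex.norm_exp]
  rw [Real.exp_lt_one_iff]
  have : ((π : ℂ) * I * τ).re = -(π * τ.im) := by
    simp [Complex.mul_re, Complex.mul_im]
  rw [this]
  have := Real.pi_pos
  nlinarith

lemma jTheta_eq_jacobiTheta₂ {τ : ℂ} (hτ : 0 < τ.im) (v : ℂ) :
    JTheta v τ = -I * cexp ((π : ℂ) * I * τ / 4 + (π : ℂ) * I * v) *
      jacobiTheta₂ (v + (τ + 1) / 2) τ := by
  set p : ℂ := cexp ((π : ℂ) * I * τ) with hpdef
  have hp : ‖p‖ < 1 := norm_exp_pi_I_tau_lt_one hτ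
  have hp0 : p ≠ 0 := Complex.exp_ne_zero _
  have hq : p ^ 2 = cexp (2 * (π : ℂ) * I * τ) := by
    rw [hpdef, ← Complex.exp_nat_mul]
    congr 1
    push_cast
    ring
  have hq1 : ‖cexp (2 * (π : ℂ) * I * τ)‖ < 1 := by rw [← hq, norm_pow]; nlinarith [norm_nonneg p]
  set e2v : ℂ := cexp (2 * (π : ℂ) * I * v) with he2vdef
  set e2v' : ℂ := cexp (-(2 * (π : ℂ) * I * v)) with he2v'def
  set x : ℂ := -(e2v * p) with hxdef
  have hx : x ≠ 0 := by
    rw [hxdef]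
    exact neg_ne_zero.mpr (mul_ne_zero (Complex.exp_ne_zero _) hp0)
  have htp := triple_product hp hp0 hx
  -- rewrite factors
  set q' : ℂ := cexp (2 * (π : ℂ) * I * τ) with hq'def
  have hB : ∀ j : ℕ, 1 + x * p ^ (2 * j + 1) = 1 - e2v * q' ^ (j + 1) := by
    intro j
    have e : q' ^ (j + 1) = p * p ^ (2 * j + 1) := by
      rw [← hq, ← pow_mul, show 2 * (j + 1) = (2 * j + 1) + 1 by ring, pow_succ]
      ring
    rw [e, hxdef]
    ring
  have hC : ∀ j : ℕ, 1 + x⁻¹ * p ^ (2 * j + 1) = 1 - e2v' * q' ^ j := by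
    intro j
    have hxinv : x⁻¹ = -(e2v' * p⁻¹) := by
      rw [hxdef, he2v'def, he2vdef, Complex.exp_neg]
      rw [inv_neg, mul_inv]
    have e : q' ^ j = p⁻¹ * p ^ (2 * j + 1) := by
      rw [← hq, ← pow_mul, show 2 * j + 1 = 2 * j + 1 by rfl, pow_succ']
      rw [inv_mul_cancel_left₀ hp0]
    rw [hxinv, e]
    ring
  rw [tprod_congr hB, tprod_congr hC] at htp
  have hqq : (fun j : ℕ => 1 - (p ^ 2) ^ (j + 1)) = fun j : ℕ => 1 - q' ^ (j + 1) := by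
    funext j; rw [hq]
  rw [hqq] at htp
  -- split off the first factor of the C-product
  have MC : Multipliable fun n : ℕ => 1 - e2v' * q' ^ (n + 1) := by
    refine (mult_one_add_geom (-e2v') hq1 1 1 one_ne_zero).congr fun j => ?_
    rw [one_mul]
    ring
  have hsplit : (∏' j : ℕ, (1 - e2v' * q' ^ j))
      = (1 - e2v') * ∏' j : ℕ, (1 - e2v' * q' ^ (j + 1)) := by
    rw [tprod_eq_zero_mul' MC]
    norm_num
  rw [hsplit] at htp
  -- tprod of JThetaFactor
  have MA : Multipliable fun n : ℕ => 1 - q' ^ (n + 1) := mult_one_sub_pow hq1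
  have MB : Multipliable fun n : ℕ => 1 - e2v * q' ^ (n + 1) := by
    refine (mult_one_add_geom (-e2v) hq1 1 1 one_ne_zero).congr fun j => ?_
    rw [one_mul]
    ring
  have MAB : Multipliable fun n : ℕ => (1 - q' ^ (n + 1)) * (1 - e2v * q' ^ (n + 1)) :=
    (MA.hasProd.mul MB.hasProd).multipliable
  have hfact : (∏' n : ℕ, JThetaFactor v τ n)
      = (∏' n : ℕ, (1 - q' ^ (n + 1))) * (∏' n : ℕ, (1 - e2v * q' ^ (n + 1))) *
        (∏' n : ℕ, (1 - e2v' * q' ^ (n + 1))) := by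
    have h1 : (∏' n : ℕ, JThetaFactor v τ n)
        = ∏' n : ℕ, ((1 - q' ^ (n + 1)) * (1 - e2v * q' ^ (n + 1)) * (1 - e2v' * q' ^ (n + 1))) :=
      tprod_congr fun n => rfl
    rw [h1, MAB.tprod_mul MC, MA.tprod_mul MB]
  -- the sum is jacobiTheta₂
  have hxexp : x = cexp (2 * (π : ℂ) * I * v + (π : ℂ) * I * τ + (π : ℂ) * I) := by
    rw [hxdef, he2vdef, hpdef, Complex.exp_add, Complex.exp_add, Complex.exp_pi_mul_I]
    ring
  have hsum : (∑' n : ℤ, p ^ ((n : ℤ) ^ 2) * x ^ (n : ℤ)) = jacobiTheta₂ (v + (τ + 1) / 2) τ := by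
    rw [jacobiTheta₂]
    refine tsum_congr fun n => ?_
    rw [hxexp, hpdef, ← Complex.exp_int_mul, ← Complex.exp_int_mul, ← Complex.exp_add,
      jacobiTheta₂_term]
    congr 1
    push_cast
    ring
  rw [hsum] at htp
  -- sine identity
  have hsin : 2 * Complex.sin ((π : ℂ) * v) = -I * cexp ((π : ℂ) * I * v) * (1 - e2v') := by
    have h1 : cexp (-((π : ℂ) * v) * I) = cexp ((π : ℂ) * I * v) * e2v' := by
      rw [he2v'def, ← Complex.exp_add]
      congr 1
      ring
    have h2 : cexp (((π : ℂ) * v) * I) = cexp ((π : ℂ) * I * v) := by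
      congr 1
      ring
    rw [Complex.sin, h1, h2]
    ring
  -- assemble
  rw [JTheta, hfact]
  have hexp4 : cexp (2 * (π : ℂ) * I * τ / 8) * cexp ((π : ℂ) * I * v)
      = cexp ((π : ℂ) * I * τ / 4 + (π : ℂ) * I * v) := by
    rw [← Complex.exp_add]
    congr 1
    ring
  calc 2 * cexp (2 * (π : ℂ) * I * τ / 8) * Complex.sin ((π : ℂ) * v) *
        ((∏' n : ℕ, (1 - q' ^ (n + 1))) * (∏' n : ℕ, (1 - e2v * q' ^ (n + 1))) *
          (∏' n : ℕ, (1 - e2v' * q' ^ (n + 1))))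
      = cexp (2 * (π : ℂ) * I * τ / 8) * (2 * Complex.sin ((π : ℂ) * v)) *
        ((∏' n : ℕ, (1 - q' ^ (n + 1))) * (∏' n : ℕ, (1 - e2v * q' ^ (n + 1))) *
          (∏' n : ℕ, (1 - e2v' * q' ^ (n + 1)))) := by ring
    _ = cexp (2 * (π : ℂ) * I * τ / 8) * (-I * cexp ((π : ℂ) * I * v)) *
        ((∏' n : ℕ, (1 - q' ^ (n + 1))) * ((∏' n : ℕ, (1 - e2v * q' ^ (n + 1))) *
          ((1 - e2v') * (∏' n : ℕ, (1 - e2v' * q' ^ (n + 1)))))) := by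
        rw [hsin]; ring
    _ = cexp (2 * (π : ℂ) * I * τ / 8) * (-I * cexp ((π : ℂ) * I * v)) *
        jacobiTheta₂ (v + (τ + 1) / 2) τ := by rw [htp]
    _ = -I * cexp ((π : ℂ) * I * τ / 4 + (π : ℂ) * I * v) *
        jacobiTheta₂ (v + (τ + 1) / 2) τ := by rw [← hexp4]; ring

/-! ### Derivative -/

lemma hasDerivAt_JTheta {τ : ℂ} (hτ : 0 < τ.im) (v : ℂ) :
    HasDerivAt (fun w => JTheta w τ)
      (-I * cexp ((π : ℂ) * I * τ / 4 + (π : ℂ) * I * v) *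
        ((π : ℂ) * I * jacobiTheta₂ (v + (τ + 1) / 2) τ + jacobiTheta₂' (v + (τ + 1) / 2) τ)) v := by
  have hfun : (fun w => JTheta w τ) = fun w =>
      -I * cexp ((π : ℂ) * I * τ / 4 + (π : ℂ) * I * w) * jacobiTheta₂ (w + (τ + 1) / 2) τ :=
    funext fun w => jTheta_eq_jacobiTheta₂ hτ w
  rw [hfun]
  have h1 : HasDerivAt (fun w : ℂ => cexp ((π : ℂ) * I * τ / 4 + (π : ℂ) * I * w))
      (cexp ((π : ℂ) * I * τ / 4 + (π : ℂ) * I * v) * ((π : ℂ) * I)) v := by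
    have hlin : HasDerivAt (fun w : ℂ => (π : ℂ) * I * τ / 4 + (π : ℂ) * I * w) ((π : ℂ) * I) v := by
      simpa using ((hasDerivAt_id v).const_mul ((π : ℂ) * I)).const_add ((π : ℂ) * I * τ / 4)
    exact hlin.cexp
  have h2 : HasDerivAt (fun w : ℂ => jacobiTheta₂ (w + (τ + 1) / 2) τ)
      (jacobiTheta₂' (v + (τ + 1) / 2) τ) v := by
    have hmain := hasDerivAt_jacobiTheta₂_fst (v + (τ + 1) / 2) hτ
    have hadd : HasDerivAt (fun w : ℂ => w + (τ + 1) / 2) 1 v := (hasDerivAt_id v).add_const _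
    simpa [Function.comp_def] using hmain.comp v hadd
  have h3 := (h1.const_mul (-I)).mul h2
  exact h3.congr_deriv (by ring)

lemma exp_pi_div_two_I : cexp ((π : ℂ) / 2 * I) = I := by
  rw [Complex.exp_mul_I, Complex.cos_pi_div_two, Complex.sin_pi_div_two]
  ring

end JTP

open JTP in
theorem jTheta_deriv_S_transform (τ : ℂ) (hτ : 0 < τ.im) (v : ℂ) :
    deriv (fun w => JTheta w (-1 / τ)) v =
      1 / I * (τ / I) ^ (1 / 2 : ℂ) * Complex.exp ((Real.pi : ℂ) * I * τ * v ^ 2) *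
        (2 * (Real.pi : ℂ) * I * τ * v * JTheta (τ * v) τ +
          τ * deriv (fun w => JTheta w τ) (τ * v)) := by
  have hτ0 : τ ≠ 0 := by
    intro h
    rw [h] at hτ
    simp at hτ
  have hσ : 0 < (-1 / τ).im := by
    rw [div_eq_mul_inv, neg_one_mul, neg_im, inv_im, neg_div, neg_neg]
    exact div_pos hτ (normSq_pos.mpr hτ0)
  rw [(hasDerivAt_JTheta hσ v).deriv, (hasDerivAt_JTheta hτ (τ * v)).deriv,
    jTheta_eq_jacobiTheta₂ hτ (τ * v)]
  set a : ℂ := v + (-1 / τ + 1) / 2 with hadef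
  set c : ℂ := (-I * τ) ^ (1 / 2 : ℂ) with hcdef
  have hc0 : c ≠ 0 := by
    rw [hcdef]
    intro h
    rcases (Complex.cpow_eq_zero_iff _ _).mp h with ⟨h1, _⟩
    exact mul_ne_zero (neg_ne_zero.mpr I_ne_zero) hτ0 h1
  have hexp0 : cexp (-(π : ℂ) * I * (τ * a) ^ 2 / τ) * cexp ((π : ℂ) * I * τ * a ^ 2) = 1 := by
    rw [← Complex.exp_add, show -(π : ℂ) * I * (τ * a) ^ 2 / τ + (π : ℂ) * I * τ * a ^ 2 = 0 by
      field_simp; ring]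
    exact Complex.exp_zero
  -- functional equation, solved form
  have hFE := jacobiTheta₂_functional_equation (τ * a) τ
  rw [mul_div_cancel_left₀ a hτ0] at hFE
  have h1 : jacobiTheta₂ a (-1 / τ) = c * cexp ((π : ℂ) * I * τ * a ^ 2) *
      jacobiTheta₂ (τ * a) τ := by
    rw [hFE, ← hcdef]
    have e : c * cexp ((π : ℂ) * I * τ * a ^ 2) *
        (1 / c * cexp (-(π : ℂ) * I * (τ * a) ^ 2 / τ) * jacobiTheta₂ a (-1 / τ))
        = (cexp (-(π : ℂ) * I * (τ * a) ^ 2 / τ) * cexp ((π : ℂ) * I * τ * a ^ 2)) *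
          jacobiTheta₂ a (-1 / τ) * (1 / c * c) := by ring
    rw [e, hexp0, one_div_mul_cancel hc0, one_mul, mul_one]
  have hFE' := jacobiTheta₂'_functional_equation (τ * a) τ
  rw [mul_div_cancel_left₀ a hτ0] at hFE'
  have h2 : jacobiTheta₂' a (-1 / τ) = 2 * (π : ℂ) * I * (τ * a) * jacobiTheta₂ a (-1 / τ)
      + c * τ * cexp ((π : ℂ) * I * τ * a ^ 2) * jacobiTheta₂' (τ * a) τ := by
    rw [hFE', ← hcdef]
    have e : c * τ * cexp ((π : ℂ) * I * τ * a ^ 2) *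
        (1 / c * cexp (-(π : ℂ) * I * (τ * a) ^ 2 / τ) / τ *
          (jacobiTheta₂' a (-1 / τ) - 2 * (π : ℂ) * I * (τ * a) * jacobiTheta₂ a (-1 / τ)))
        = (cexp (-(π : ℂ) * I * (τ * a) ^ 2 / τ) * cexp ((π : ℂ) * I * τ * a ^ 2)) *
          (jacobiTheta₂' a (-1 / τ) - 2 * (π : ℂ) * I * (τ * a) * jacobiTheta₂ a (-1 / τ)) *
          (1 / c * c) * (1 / τ * τ) := by ring
    rw [e, hexp0, one_div_mul_cancel hc0, one_div_mul_cancel hτ0, one_mul, mul_one, mul_one]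
    ring
  -- shift identities
  have hshift : τ * v + (τ + 1) / 2 = τ * a + 1 := by
    rw [hadef]
    field_simp
    ring
  have hsh1 : jacobiTheta₂ (τ * v + (τ + 1) / 2) τ = jacobiTheta₂ (τ * a) τ := by
    rw [hshift]
    exact jacobiTheta₂_add_left (τ * a) τ
  have hsh2 : jacobiTheta₂' (τ * v + (τ + 1) / 2) τ = jacobiTheta₂' (τ * a) τ := by
    rw [hshift]
    exact jacobiTheta₂'_add_left (τ * a) τ
  rw [hsh1, hsh2, h2, h1]
  -- the branch of the square root
  rw [show τ / I = -I * τ by rw [Complex.div_I]; ring, ← hcdef, one_div, Complex.inv_I]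
  -- key exponential identity
  have hkey : cexp ((π : ℂ) * I * (-1 / τ) / 4 + (π : ℂ) * I * v) *
      cexp ((π : ℂ) * I * τ * a ^ 2) * I
      = cexp ((π : ℂ) * I * τ * v ^ 2) *
        cexp ((π : ℂ) * I * τ / 4 + (π : ℂ) * I * (τ * v)) := by
    rw [← Complex.exp_add, ← Complex.exp_add,
      show (π : ℂ) * I * (-1 / τ) / 4 + (π : ℂ) * I * v + (π : ℂ) * I * τ * a ^ 2
        = ((π : ℂ) * I * τ * v ^ 2 + ((π : ℂ) * I * τ / 4 + (π : ℂ) * I * (τ * v)))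
          + -((π : ℂ) / 2 * I) by rw [hadef]; field_simp; ring,
      Complex.exp_add]
    have hIneg : cexp (-((π : ℂ) / 2 * I)) = -I := by
      rw [Complex.exp_neg, exp_pi_div_two_I, Complex.inv_I]
    rw [hIneg, mul_assoc, neg_mul, Complex.I_mul_I]
    ring
  have ha : τ * a = τ * v + (τ - 1) / 2 := by
    rw [hadef]
    field_simp
    ring
  linear_combination (-2 * (π : ℂ) * I ^ 2 * c * cexp ((π : ℂ) * I * (-1 / τ) / 4 + (π : ℂ) * I * v) *
      cexp ((π : ℂ) * I * τ * a ^ 2) * jacobiTheta₂ (τ * a) τ) * ha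
    - (c * (2 * (π : ℂ) * I * τ * v * jacobiTheta₂ (τ * a) τ
        + (π : ℂ) * I * τ * jacobiTheta₂ (τ * a) τ + τ * jacobiTheta₂' (τ * a) τ)) * hkey
    + (-(2 * I * (π : ℂ) * c * τ * v * jacobiTheta₂ (τ * a) τ
        + I * (π : ℂ) * c * τ * jacobiTheta₂ (τ * a) τ + c * τ * jacobiTheta₂' (τ * a) τ)
      * cexp ((π : ℂ) * I * τ * v ^ 2)
      * cexp ((π : ℂ) * I * τ / 4 + (π : ℂ) * I * (τ * v))) * Complex.I_sq
end

section
/- For every τ in the upper half-plane ℍ, the Jacobi derivative identity holds: θ'(0, τ) = π · θ₁(0, τ) · θ₂(0, τ) · θ₃(0, τ). -/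
open Complex

lemma myOneSubNe {z : ℂ} (h : ‖z‖ < 1) : 1 - z ≠ 0 := by
  intro h0
  rw [sub_eq_zero] at h0
  rw [← h0] at h
  simp at h

lemma mySlit {z : ℂ} (h : ‖z‖ < 1) : 1 - z ∈ Complex.slitPlane := by
  rw [Complex.mem_slitPlane_iff]
  left
  have := Complex.abs_re_le_norm z
  simp only [Complex.sub_re, Complex.one_re]
  have : |z.re| < 1 := lt_of_le_of_lt (Complex.abs_re_le_norm z) h
  have := abs_lt.mp this
  linarith

lemma mySummableLog {g : ℕ → ℂ} (hg : Summable fun n => ‖g n‖) :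
    Summable fun n => Complex.log (1 + g n) := by
  have h0 : Filter.Tendsto (fun n => ‖g n‖) Filter.atTop (nhds 0) := hg.tendsto_atTop_zero
  have hev : ∀ᶠ n in Filter.atTop, ‖g n‖ ≤ 1/2 := by
    have := h0.eventually (eventually_le_nhds (by norm_num : (0:ℝ) < 1/2))
    exact this
  apply Summable.of_norm_bounded_eventually_nat (g := fun n => 3/2 * ‖g n‖) (hg.mul_left _)
  filter_upwards [hev] with n hn
  exact Complex.norm_log_one_add_half_le_self hn

lemma myHasProdExp {f : ℕ → ℂ} (h : Summable fun n => Complex.log (f n)) (h0 : ∀ n, f n ≠ 0) :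
    HasProd f (Complex.exp (∑' n, Complex.log (f n))) := by
  have := h.hasSum.cexp
  have hfe : (cexp ∘ fun n => Complex.log (f n)) = f := by
    funext n
    exact Complex.exp_log (h0 n)
  rwa [hfe] at this

lemma myElemNeZero {c z : ℂ} (hc : ‖c‖ < 1) (hz : ‖z‖ < 1) (n : ℕ) : 1 + c * z ^ n ≠ 0 := by
  have h1 : ‖c * z ^ n‖ < 1 := by
    rw [norm_mul, norm_pow]
    calc ‖c‖ * ‖z‖ ^ n ≤ ‖c‖ * 1 := by
          gcongr
          exact pow_le_one₀ (norm_nonneg z) hz.le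
    _ = ‖c‖ := mul_one _
    _ < 1 := hc
  intro h0
  have : c * z ^ n = -1 := by linear_combination h0
  rw [this] at h1
  simp at h1

lemma myElemSummableNorm {c z : ℂ} (hz : ‖z‖ < 1) : Summable fun n : ℕ => ‖c * z ^ n‖ := by
  simp only [norm_mul, norm_pow]
  exact (summable_geometric_of_lt_one (norm_nonneg z) hz).mul_left _

lemma myElemHasProd {c z : ℂ} (hc : ‖c‖ < 1) (hz : ‖z‖ < 1) :
    HasProd (fun n : ℕ => 1 + c * z ^ n)
      (Complex.exp (∑' n : ℕ, Complex.log (1 + c * z ^ n))) :=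
  myHasProdExp (mySummableLog (myElemSummableNorm hz)) (myElemNeZero hc hz)

lemma myElemMultipliable {c z : ℂ} (hc : ‖c‖ < 1) (hz : ‖z‖ < 1) :
    Multipliable (fun n : ℕ => 1 + c * z ^ n) :=
  (myElemHasProd hc hz).multipliable

lemma myElemTprodNeZero {c z : ℂ} (hc : ‖c‖ < 1) (hz : ‖z‖ < 1) :
    (∏' n : ℕ, (1 + c * z ^ n)) ≠ 0 := by
  rw [(myElemHasProd hc hz).tprod_eq]
  exact Complex.exp_ne_zero _

lemma myAlgebra {q s : ℂ} (hq : ‖q‖ < 1) (hs : ‖s‖ < 1) (hs2 : s * s = q) :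
    (∏' n : ℕ, (1 + q * q^n)) * (∏' n : ℕ, (1 + (-s) * q^n)) * (∏' n : ℕ, (1 + s * q^n)) = 1 := by
  have hmq : ‖-q‖ < 1 := by rwa [norm_neg]
  have hms : ‖-s‖ < 1 := by rwa [norm_neg]
  have hq2 : ‖q^2‖ < 1 := by
    rw [norm_pow]
    exact pow_lt_one₀ (norm_nonneg q) hq (by norm_num)
  have hmqq : ‖-(q*q)‖ < 1 := by
    rw [norm_neg, norm_mul]
    nlinarith [norm_nonneg q]
  have hT1 : Multipliable (fun n : ℕ => 1 + (-q) * q^n) := myElemMultipliable hmq hq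
  have hT2 : Multipliable (fun n : ℕ => 1 + q * q^n) := myElemMultipliable hq hq
  have hT3 : Multipliable (fun n : ℕ => 1 + (-s) * q^n) := myElemMultipliable hms hq
  have hT4 : Multipliable (fun n : ℕ => 1 + s * q^n) := myElemMultipliable hs hq
  have hU : Multipliable (fun k : ℕ => 1 + (-q) * (q^2)^k) := myElemMultipliable hmq hq2
  have hV : Multipliable (fun k : ℕ => 1 + (-(q*q)) * (q^2)^k) := myElemMultipliable hmqq hq2
  have hT1ne : (∏' n : ℕ, (1 + (-q) * q^n)) ≠ 0 := myElemTprodNeZero hmq hq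
  -- step 1 : T3 * T4 = U
  have step1 : (∏' n : ℕ, (1 + (-s) * q^n)) * (∏' n : ℕ, (1 + s * q^n))
      = ∏' k : ℕ, (1 + (-q) * (q^2)^k) := by
    rw [← Multipliable.tprod_mul hT3 hT4]
    apply tprod_congr
    intro n
    have hp : (q^2)^n = q^n * q^n := by rw [← pow_mul, two_mul, pow_add]
    rw [hp]
    linear_combination (-(q^n * q^n)) * hs2
  -- step 2 : T2 * T1 = V
  have step2 : (∏' n : ℕ, (1 + q * q^n)) * (∏' n : ℕ, (1 + (-q) * q^n))
      = ∏' k : ℕ, (1 + (-(q*q)) * (q^2)^k) := by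
    rw [← Multipliable.tprod_mul hT2 hT1]
    apply tprod_congr
    intro n
    have hp : (q^2)^n = q^n * q^n := by rw [← pow_mul, two_mul, pow_add]
    rw [hp]
    ring
  -- step 3 : U * V = T1  (even/odd split)
  have he : Multipliable (fun k : ℕ => 1 + (-q) * q^(2*k)) :=
    hU.congr fun k => by ring
  have ho : Multipliable (fun k : ℕ => 1 + (-q) * q^(2*k+1)) := by
    apply hV.congr
    intro k
    ring
  have step3 : (∏' k : ℕ, (1 + (-q) * (q^2)^k)) * (∏' k : ℕ, (1 + (-(q*q)) * (q^2)^k))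
      = ∏' n : ℕ, (1 + (-q) * q^n) := by
    have h := tprod_even_mul_odd (f := fun n : ℕ => 1 + (-q) * q^n) he ho
    rw [← h]
    congr 1
    · exact tprod_congr fun k => by ring
    · exact tprod_congr fun k => by ring
  have key : ((∏' n : ℕ, (1 + q * q^n)) * (∏' n : ℕ, (1 + (-s) * q^n)) * (∏' n : ℕ, (1 + s * q^n)))
      * (∏' n : ℕ, (1 + (-q) * q^n)) = 1 * (∏' n : ℕ, (1 + (-q) * q^n)) := by
    rw [show ((∏' n : ℕ, (1 + q * q^n)) * (∏' n : ℕ, (1 + (-s) * q^n)) * (∏' n : ℕ, (1 + s * q^n)))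
        * (∏' n : ℕ, (1 + (-q) * q^n))
        = ((∏' n : ℕ, (1 + (-s) * q^n)) * (∏' n : ℕ, (1 + s * q^n)))
          * ((∏' n : ℕ, (1 + q * q^n)) * (∏' n : ℕ, (1 + (-q) * q^n))) from by ring,
      step1, step2, step3, one_mul]
  exact mul_right_cancel₀ hT1ne key

lemma myProdHasDerivAt (τ : ℂ) (hτ : 0 < τ.im) :
    ∃ d, HasDerivAt (fun w : ℂ => ∏' n : ℕ, JThetaFactor w τ n) d 0 := by
  have hπ := Real.pi_pos
  have hre : (2 * (Real.pi : ℂ) * I * τ).re = -(2 * Real.pi * τ.im) := by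
    simp [Complex.mul_re, Complex.mul_im]
  have haq : ‖cexp (2 * (Real.pi : ℂ) * I * τ)‖ = Real.exp (-(2 * Real.pi * τ.im)) := by
    rw [Complex.norm_exp, hre]
  set aq : ℝ := ‖cexp (2 * (Real.pi : ℂ) * I * τ)‖ with haq_def
  have haq1 : aq < 1 := by
    rw [haq]
    apply Real.exp_lt_one_iff.mpr
    nlinarith
  have haq0 : 0 < aq := by rw [haq]; exact Real.exp_pos _
  set b := Real.sqrt aq with hb_def
  have hb0 : 0 < b := Real.sqrt_pos.mpr haq0
  have hbsq : b ^ 2 = aq := Real.sq_sqrt haq0.le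
  have hb1 : b < 1 := by nlinarith [Real.sqrt_nonneg aq]
  set r := Real.log (1/b) / (2 * Real.pi) with hr_def
  have h1b : 1 < 1/b := by rw [lt_div_iff₀ hb0]; linarith
  have hr : 0 < r := div_pos (Real.log_pos h1b) (by positivity)
  have hexp_r : Real.exp (2 * Real.pi * r) = 1/b := by
    rw [show 2 * Real.pi * r = Real.log (1/b) by rw [hr_def]; field_simp]
    exact Real.exp_log (by positivity)
  have hqpow : ∀ n : ℕ, ‖cexp (2 * (Real.pi : ℂ) * I * τ) ^ (n+1)‖ = b ^ (2*(n+1)) := by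
    intro n
    rw [norm_pow, ← haq_def, ← hbsq, ← pow_mul]
  -- bound on exp factors
  have hexpbound : ∀ w : ℂ, ‖w‖ < r → ∀ e : ℂ, e.re ≤ 2 * Real.pi * ‖w‖ → ‖cexp e‖ ≤ 1/b := by
    intro w hw e he
    rw [Complex.norm_exp, ← hexp_r]
    apply Real.exp_le_exp.mpr
    nlinarith
  have hreA : ∀ w : ℂ, (2 * (Real.pi : ℂ) * I * w).re ≤ 2 * Real.pi * ‖w‖ := by
    intro w
    have h1 : |w.im| ≤ ‖w‖ := Complex.abs_im_le_norm w
    have h2 := abs_le.mp h1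
    simp [Complex.mul_re, Complex.mul_im]
    nlinarith
  have hreB : ∀ w : ℂ, (-(2 * (Real.pi : ℂ) * I * w)).re ≤ 2 * Real.pi * ‖w‖ := by
    intro w
    have h1 : |w.im| ≤ ‖w‖ := Complex.abs_im_le_norm w
    have h2 := abs_le.mp h1
    simp [Complex.mul_re, Complex.mul_im]
    nlinarith
  have hA : ∀ w : ℂ, ‖w‖ < r → ‖cexp (2 * (Real.pi : ℂ) * I * w)‖ ≤ 1/b :=
    fun w hw => hexpbound w hw _ (hreA w)
  have hB : ∀ w : ℂ, ‖w‖ < r → ‖cexp (-(2 * (Real.pi : ℂ) * I * w))‖ ≤ 1/b :=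
    fun w hw => hexpbound w hw _ (hreB w)
  -- small factor bound
  have hsmall : ∀ e : ℂ, ‖cexp e‖ ≤ 1/b → ∀ n : ℕ,
      ‖cexp e * cexp (2 * (Real.pi : ℂ) * I * τ) ^ (n+1)‖ ≤ b ^ (2*n+1) := by
    intro e he n
    rw [norm_mul, hqpow n]
    have h2 : b ^ (2*(n+1)) = b * b ^ (2*n+1) := by ring
    calc ‖cexp e‖ * b ^ (2*(n+1)) ≤ (1/b) * (b * b ^ (2*n+1)) := by
          rw [← h2]; gcongr
      _ = b ^ (2*n+1) := by field_simp
  have hblt1 : ∀ n : ℕ, b ^ (2*n+1) < 1 := fun n => pow_lt_one₀ hb0.le hb1 (by omega)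
  -- summability of logs
  have hgeo : Summable (fun n : ℕ => b ^ (2*n+1)) := by
    have : Summable (fun n : ℕ => b * (b^2)^n) :=
      (summable_geometric_of_lt_one (by positivity) (by nlinarith)).mul_left b
    apply this.congr
    intro n
    rw [← pow_mul]
    ring
  have hlogsum : ∀ e : ℂ, ‖cexp e‖ ≤ 1/b →
      Summable (fun n : ℕ => Complex.log (1 - cexp e * cexp (2 * (Real.pi : ℂ) * I * τ) ^ (n+1))) := by
    intro e he
    have : Summable (fun n : ℕ => Complex.log (1 + (-(cexp e * cexp (2 * (Real.pi : ℂ) * I * τ) ^ (n+1))))) := by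
      apply mySummableLog
      apply Summable.of_nonneg_of_le (fun n => norm_nonneg _) _ hgeo
      intro n
      rw [norm_neg]
      exact hsmall e he n
    apply this.congr
    intro n
    rw [← sub_eq_add_neg]
  have hone : ‖cexp (0 : ℂ)‖ ≤ 1/b := by
    rw [Complex.exp_zero]
    simp only [norm_one]
    linarith
  have hconstsum : Summable (fun n : ℕ => Complex.log (1 - cexp (2 * (Real.pi : ℂ) * I * τ) ^ (n+1))) := by
    have := hlogsum 0 hone
    simp only [Complex.exp_zero, one_mul] at this
    exact this
  -- the log-sum function and its derivative
  have hmain := hasDerivAt_tsum_of_isPreconnected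
    (u := fun n : ℕ => 4 * Real.pi * b ^ (2*n+1) / (1-b))
    (g := fun (n : ℕ) (w : ℂ) =>
      Complex.log (1 - cexp (2 * (Real.pi : ℂ) * I * τ) ^ (n+1)) +
      Complex.log (1 - cexp (2 * (Real.pi : ℂ) * I * w) * cexp (2 * (Real.pi : ℂ) * I * τ) ^ (n+1)) +
      Complex.log (1 - cexp (-(2 * (Real.pi : ℂ) * I * w)) * cexp (2 * (Real.pi : ℂ) * I * τ) ^ (n+1)))
    (g' := fun (n : ℕ) (w : ℂ) =>
      (0 + -(cexp (2 * (Real.pi : ℂ) * I * w) * (2 * (Real.pi : ℂ) * I) * cexp (2 * (Real.pi : ℂ) * I * τ) ^ (n+1)) /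
        (1 - cexp (2 * (Real.pi : ℂ) * I * w) * cexp (2 * (Real.pi : ℂ) * I * τ) ^ (n+1))) +
      -(cexp (-(2 * (Real.pi : ℂ) * I * w)) * -(2 * (Real.pi : ℂ) * I) * cexp (2 * (Real.pi : ℂ) * I * τ) ^ (n+1)) /
        (1 - cexp (-(2 * (Real.pi : ℂ) * I * w)) * cexp (2 * (Real.pi : ℂ) * I * τ) ^ (n+1)))
    (t := Metric.ball (0:ℂ) r)
    ?_ Metric.isOpen_ball (convex_ball (0:ℂ) r).isPreconnected ?_ ?_
    (Metric.mem_ball_self hr) ?_ (Metric.mem_ball_self hr)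
  · -- use hmain
    obtain ⟨D, hmain⟩ : ∃ D, HasDerivAt (fun w : ℂ => ∑' n : ℕ,
        (Complex.log (1 - cexp (2 * (Real.pi : ℂ) * I * τ) ^ (n+1)) +
        Complex.log (1 - cexp (2 * (Real.pi : ℂ) * I * w) * cexp (2 * (Real.pi : ℂ) * I * τ) ^ (n+1)) +
        Complex.log (1 - cexp (-(2 * (Real.pi : ℂ) * I * w)) * cexp (2 * (Real.pi : ℂ) * I * τ) ^ (n+1)))) D 0 :=
      ⟨_, hmain⟩
    refine ⟨_, (hmain.cexp).congr_of_eventuallyEq ?_⟩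
    filter_upwards [Metric.ball_mem_nhds (0:ℂ) hr] with w hw
    have hw' : ‖w‖ < r := by rwa [Metric.mem_ball, dist_zero_right] at hw
    have hS : Summable (fun n : ℕ =>
        Complex.log (1 - cexp (2 * (Real.pi : ℂ) * I * τ) ^ (n+1)) +
        Complex.log (1 - cexp (2 * (Real.pi : ℂ) * I * w) * cexp (2 * (Real.pi : ℂ) * I * τ) ^ (n+1)) +
        Complex.log (1 - cexp (-(2 * (Real.pi : ℂ) * I * w)) * cexp (2 * (Real.pi : ℂ) * I * τ) ^ (n+1))) :=
      (hconstsum.add (hlogsum _ (hA w hw'))).add (hlogsum _ (hB w hw'))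
    have hp := hS.hasSum.cexp
    have heq : (cexp ∘ fun n : ℕ =>
        Complex.log (1 - cexp (2 * (Real.pi : ℂ) * I * τ) ^ (n+1)) +
        Complex.log (1 - cexp (2 * (Real.pi : ℂ) * I * w) * cexp (2 * (Real.pi : ℂ) * I * τ) ^ (n+1)) +
        Complex.log (1 - cexp (-(2 * (Real.pi : ℂ) * I * w)) * cexp (2 * (Real.pi : ℂ) * I * τ) ^ (n+1)))
        = fun n => JThetaFactor w τ n := by
      funext n
      have hn1 : (1 : ℂ) - cexp (2 * (Real.pi : ℂ) * I * τ) ^ (n+1) ≠ 0 := by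
        apply myOneSubNe
        rw [hqpow n]
        exact pow_lt_one₀ hb0.le hb1 (by omega)
      have hn2 : (1 : ℂ) - cexp (2 * (Real.pi : ℂ) * I * w) * cexp (2 * (Real.pi : ℂ) * I * τ) ^ (n+1) ≠ 0 :=
        myOneSubNe (lt_of_le_of_lt (hsmall _ (hA w hw') n) (hblt1 n))
      have hn3 : (1 : ℂ) - cexp (-(2 * (Real.pi : ℂ) * I * w)) * cexp (2 * (Real.pi : ℂ) * I * τ) ^ (n+1) ≠ 0 :=
        myOneSubNe (lt_of_le_of_lt (hsmall _ (hB w hw') n) (hblt1 n))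
      simp only [Function.comp, JThetaFactor]
      rw [Complex.exp_add, Complex.exp_add, Complex.exp_log hn1, Complex.exp_log hn2,
        Complex.exp_log hn3]
    rw [heq] at hp
    exact hp.tprod_eq
  · -- Summable u
    have : Summable (fun n : ℕ => (4 * Real.pi * b / (1-b)) * (b^2)^n) :=
      (summable_geometric_of_lt_one (by positivity) (by nlinarith)).mul_left _
    apply this.congr
    intro n
    rw [← pow_mul]
    field_simp
    ring
  · -- HasDerivAt
    intro n w hw
    have hw' : ‖w‖ < r := by rwa [Metric.mem_ball, dist_zero_right] at hw
    have h1 : HasDerivAt (fun w : ℂ => 2 * (Real.pi : ℂ) * I * w) (2 * (Real.pi : ℂ) * I) w := by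
      simpa using (hasDerivAt_id w).const_mul (2 * (Real.pi : ℂ) * I)
    have h2 := h1.cexp
    have h2' := (h1.neg).cexp
    have h3 := (h2.mul_const (cexp (2 * (Real.pi : ℂ) * I * τ) ^ (n+1))).const_sub 1
    have h3' := (h2'.mul_const (cexp (2 * (Real.pi : ℂ) * I * τ) ^ (n+1))).const_sub 1
    have h4 := h3.clog (mySlit (lt_of_le_of_lt (hsmall _ (hA w hw') n) (hblt1 n)))
    have h4' := h3'.clog (mySlit (lt_of_le_of_lt (hsmall _ (hB w hw') n) (hblt1 n)))
    exact ((hasDerivAt_const w _).add h4).add h4'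
  · -- bound on g'
    intro n w hw
    have hw' : ‖w‖ < r := by rwa [Metric.mem_ball, dist_zero_right] at hw
    have hc2 : ‖2 * (Real.pi : ℂ) * I‖ = 2 * Real.pi := by
      simp [abs_of_pos hπ]
    have hbound : ∀ e : ℂ, ‖cexp e‖ ≤ 1/b →
        ‖-(cexp e * (2 * (Real.pi : ℂ) * I) * cexp (2 * (Real.pi : ℂ) * I * τ) ^ (n+1)) /
          (1 - cexp e * cexp (2 * (Real.pi : ℂ) * I * τ) ^ (n+1))‖
          ≤ 2 * Real.pi * b ^ (2*n+1) / (1-b) := by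
      intro e he
      rw [norm_div, norm_neg]
      have hnum : ‖cexp e * (2 * (Real.pi : ℂ) * I) * cexp (2 * (Real.pi : ℂ) * I * τ) ^ (n+1)‖
          ≤ 2 * Real.pi * b ^ (2*n+1) := by
        have : cexp e * (2 * (Real.pi : ℂ) * I) * cexp (2 * (Real.pi : ℂ) * I * τ) ^ (n+1)
            = (2 * (Real.pi : ℂ) * I) * (cexp e * cexp (2 * (Real.pi : ℂ) * I * τ) ^ (n+1)) := by
          ring
        rw [this, norm_mul, hc2]
        have := hsmall e he n
        nlinarith [norm_nonneg (cexp e * cexp (2 * (Real.pi : ℂ) * I * τ) ^ (n+1))]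
      have hden : 1 - b ≤ ‖1 - cexp e * cexp (2 * (Real.pi : ℂ) * I * τ) ^ (n+1)‖ := by
        have h1 := norm_sub_norm_le (1 : ℂ) (cexp e * cexp (2 * (Real.pi : ℂ) * I * τ) ^ (n+1))
        have h2 := hsmall e he n
        have h3 : b ^ (2*n+1) ≤ b := by
          calc b ^ (2*n+1) ≤ b^1 := pow_le_pow_of_le_one hb0.le hb1.le (by omega)
            _ = b := pow_one b
        simp only [norm_one] at h1
        linarith
      exact div_le_div₀ (by positivity) hnum (by linarith) hden
    have hb1' := hbound _ (hA w hw')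
    have hb2' := hbound _ (hB w hw')
    have hrw : cexp (-(2 * (Real.pi : ℂ) * I * w)) * -(2 * (Real.pi : ℂ) * I) *
          cexp (2 * (Real.pi : ℂ) * I * τ) ^ (n+1)
        = -(cexp (-(2 * (Real.pi : ℂ) * I * w)) * (2 * (Real.pi : ℂ) * I) *
          cexp (2 * (Real.pi : ℂ) * I * τ) ^ (n+1)) := by ring
    calc ‖(0 + -(cexp (2 * (Real.pi : ℂ) * I * w) * (2 * (Real.pi : ℂ) * I) * cexp (2 * (Real.pi : ℂ) * I * τ) ^ (n+1)) /
        (1 - cexp (2 * (Real.pi : ℂ) * I * w) * cexp (2 * (Real.pi : ℂ) * I * τ) ^ (n+1))) +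
      -(cexp (-(2 * (Real.pi : ℂ) * I * w)) * -(2 * (Real.pi : ℂ) * I) * cexp (2 * (Real.pi : ℂ) * I * τ) ^ (n+1)) /
        (1 - cexp (-(2 * (Real.pi : ℂ) * I * w)) * cexp (2 * (Real.pi : ℂ) * I * τ) ^ (n+1))‖
        ≤ ‖-(cexp (2 * (Real.pi : ℂ) * I * w) * (2 * (Real.pi : ℂ) * I) * cexp (2 * (Real.pi : ℂ) * I * τ) ^ (n+1)) /
        (1 - cexp (2 * (Real.pi : ℂ) * I * w) * cexp (2 * (Real.pi : ℂ) * I * τ) ^ (n+1))‖ +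
      ‖-(cexp (-(2 * (Real.pi : ℂ) * I * w)) * -(2 * (Real.pi : ℂ) * I) * cexp (2 * (Real.pi : ℂ) * I * τ) ^ (n+1)) /
        (1 - cexp (-(2 * (Real.pi : ℂ) * I * w)) * cexp (2 * (Real.pi : ℂ) * I * τ) ^ (n+1))‖ := by
          rw [zero_add]; exact norm_add_le _ _
      _ ≤ 2 * Real.pi * b ^ (2*n+1) / (1-b) + 2 * Real.pi * b ^ (2*n+1) / (1-b) := by
          apply add_le_add hb1'
          rw [hrw, neg_div, norm_neg]
          exact hb2'
      _ = 4 * Real.pi * b ^ (2*n+1) / (1-b) := by ring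
  · -- summable at 0
    exact (hconstsum.add (hlogsum _ (hA 0 (by simpa using hr)))).add
      (hlogsum _ (hB 0 (by simpa using hr)))

theorem jacobi_derivative_identity (τ : ℂ) (hτ : 0 < τ.im) :
    deriv (fun w => JTheta w τ) 0 =
      (Real.pi : ℂ) * JTheta1 0 τ * JTheta2 0 τ * JTheta3 0 τ := by
  have hπ := Real.pi_pos
  have hreq : (2 * (Real.pi : ℂ) * I * τ).re = -(2 * Real.pi * τ.im) := by
    simp [Complex.mul_re, Complex.mul_im]
  have hqnorm : ‖cexp (2 * (Real.pi : ℂ) * I * τ)‖ < 1 := by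
    rw [Complex.norm_exp, hreq]
    apply Real.exp_lt_one_iff.mpr
    nlinarith
  have hres : ((Real.pi : ℂ) * I * τ).re = -(Real.pi * τ.im) := by
    simp [Complex.mul_re, Complex.mul_im]
  have hsnorm : ‖cexp ((Real.pi : ℂ) * I * τ)‖ < 1 := by
    rw [Complex.norm_exp, hres]
    apply Real.exp_lt_one_iff.mpr
    nlinarith
  have hs2 : cexp ((Real.pi : ℂ) * I * τ) * cexp ((Real.pi : ℂ) * I * τ)
      = cexp (2 * (Real.pi : ℂ) * I * τ) := by
    rw [← Complex.exp_add]
    congr 1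
    ring
  have hexpn : ∀ n : ℕ, cexp (2 * (Real.pi : ℂ) * I * τ * ((n : ℂ) + 1/2))
      = cexp ((Real.pi : ℂ) * I * τ) * cexp (2 * (Real.pi : ℂ) * I * τ) ^ n := by
    intro n
    rw [← Complex.exp_nat_mul, ← Complex.exp_add]
    congr 1
    ring
  set q : ℂ := cexp (2 * (Real.pi : ℂ) * I * τ) with hq_def
  set s : ℂ := cexp ((Real.pi : ℂ) * I * τ) with hs_def
  have hmq : ‖-q‖ < 1 := by rwa [norm_neg]
  have hms : ‖-s‖ < 1 := by rwa [norm_neg]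
  have hT1 : Multipliable (fun n : ℕ => 1 + (-q) * q^n) := myElemMultipliable hmq hqnorm
  have hT2 : Multipliable (fun n : ℕ => 1 + q * q^n) := myElemMultipliable hqnorm hqnorm
  have hT3 : Multipliable (fun n : ℕ => 1 + (-s) * q^n) := myElemMultipliable hms hqnorm
  have hT4 : Multipliable (fun n : ℕ => 1 + s * q^n) := myElemMultipliable hsnorm hqnorm
  have hP0 : (∏' n : ℕ, JThetaFactor 0 τ n)
      = (∏' n : ℕ, (1 + (-q) * q^n)) *
        ((∏' n : ℕ, (1 + (-q) * q^n)) * (∏' n : ℕ, (1 + (-q) * q^n))) := by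
    rw [← Multipliable.tprod_mul hT1 hT1, ← Multipliable.tprod_mul hT1 (hT1.mul hT1)]
    apply tprod_congr
    intro n
    simp only [JThetaFactor, mul_zero, neg_zero, Complex.exp_zero, one_mul, ← hq_def]
    ring
  have hTh1 : JTheta1 0 τ = 2 * cexp (2 * (Real.pi : ℂ) * I * τ / 8) *
      ((∏' n : ℕ, (1 + (-q) * q^n)) *
        ((∏' n : ℕ, (1 + q * q^n)) * (∏' n : ℕ, (1 + q * q^n)))) := by
    rw [JTheta1, ← Multipliable.tprod_mul hT2 hT2, ← Multipliable.tprod_mul hT1 (hT2.mul hT2)]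
    simp only [mul_zero, Complex.cos_zero, mul_one]
    congr 1
    apply tprod_congr
    intro n
    simp only [JTheta1Factor, mul_zero, neg_zero, Complex.exp_zero, one_mul, ← hq_def]
    ring
  have hTh2 : JTheta2 0 τ =
      (∏' n : ℕ, (1 + (-q) * q^n)) *
        ((∏' n : ℕ, (1 + (-s) * q^n)) * (∏' n : ℕ, (1 + (-s) * q^n))) := by
    rw [JTheta2, ← Multipliable.tprod_mul hT3 hT3, ← Multipliable.tprod_mul hT1 (hT3.mul hT3)]
    apply tprod_congr
    intro n
    simp only [JTheta2Factor, mul_zero, neg_zero, Complex.exp_zero, one_mul, hexpn,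
      ← hq_def, ← hs_def]
    ring
  have hTh3 : JTheta3 0 τ =
      (∏' n : ℕ, (1 + (-q) * q^n)) *
        ((∏' n : ℕ, (1 + s * q^n)) * (∏' n : ℕ, (1 + s * q^n))) := by
    rw [JTheta3, ← Multipliable.tprod_mul hT4 hT4, ← Multipliable.tprod_mul hT1 (hT4.mul hT4)]
    apply tprod_congr
    intro n
    simp only [JTheta3Factor, mul_zero, neg_zero, Complex.exp_zero, one_mul, hexpn,
      ← hq_def, ← hs_def]
    ring
  obtain ⟨d, hd⟩ := myProdHasDerivAt τ hτ
  have hsin : HasDerivAt (fun w : ℂ => Complex.sin ((Real.pi : ℂ) * w)) ((Real.pi : ℂ)) 0 := by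
    have h1 : HasDerivAt (fun w : ℂ => (Real.pi : ℂ) * w) ((Real.pi : ℂ)) 0 := by
      simpa using (hasDerivAt_id (0:ℂ)).const_mul ((Real.pi : ℂ))
    have h2 := (Complex.hasDerivAt_sin ((Real.pi : ℂ) * 0)).comp 0 h1
    simpa [Function.comp_def] using h2
  have hD := (hsin.mul hd).const_mul (2 * cexp (2 * (Real.pi : ℂ) * I * τ / 8))
  have hDJ : HasDerivAt (fun w => JTheta w τ)
      (2 * cexp (2 * (Real.pi : ℂ) * I * τ / 8) *
        ((Real.pi : ℂ) * (∏' n : ℕ, JThetaFactor 0 τ n) + Complex.sin ((Real.pi : ℂ) * 0) * d))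
      0 := by
    apply hD.congr_of_eventuallyEq
    apply Filter.Eventually.of_forall
    intro w
    simp only [JTheta, Pi.mul_apply]
    ring
  rw [hDJ.deriv, hP0, hTh1, hTh2, hTh3]
  have halg := myAlgebra hqnorm hsnorm hs2
  simp only [mul_zero, Complex.sin_zero, zero_mul, add_zero]
  linear_combination (-(2 * cexp (2 * (Real.pi : ℂ) * I * τ / 8) * (Real.pi : ℂ) *
    (∏' n : ℕ, (1 + (-q) * q^n)) * (∏' n : ℕ, (1 + (-q) * q^n)) * (∏' n : ℕ, (1 + (-q) * q^n)) *
    ((∏' n : ℕ, (1 + q * q^n)) * (∏' n : ℕ, (1 + (-s) * q^n)) * (∏' n : ℕ, (1 + s * q^n)) + 1)))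
    * halg
end
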